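/- arXiv:2305.01927 — 6 statements merged into one kernel-verified Lean document; each statement's English description precedes it below -/
import Mathlib

section
/- Let 1 = n_1 ≤ n_2 ≤ … ≤ n_t be integers with t ≥ 2 and n_t ≥ 3. Then χ₁(K_{n_1,…,n_t}) = 1 + χ₁(K_{n_2,…,n_{t−1}}), where χ₁ of the complete multipartite graph with empty class list is 0. -/
open SimpleGraph

/-- A 1-selection on `G`: each vertex `v` selects (at most) one pair containing `v`;
deleting the selected pairs from the edge set removes at most one edge incident
to each vertex.  (Selecting a non-edge, e.g. the diagonal, deletes nothing at `v`.) -/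
def IsOneSelection {V : Type*} (G : SimpleGraph V) (f : V → Sym2 V) : Prop :=
  ∀ v : V, v ∈ f v

/-- The 1-removed graph `G_f`. -/
def oneRemoved {V : Type*} (G : SimpleGraph V) (f : V → Sym2 V) : SimpleGraph V :=
  G.deleteEdges (Set.range f)

/-- The chromatic number of `G` as a natural number. -/
noncomputable def chromNum {V : Type*} (G : SimpleGraph V) : ℕ :=
  sInf {n : ℕ | G.Colorable n}

/-- The robust chromatic number `χ₁(G)`: the minimum of `χ(G_f)` over all 1-selections. -/
noncomputable def robustChromNum {V : Type*} (G : SimpleGraph V) : ℕ :=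
  sInf {m : ℕ | ∃ f : V → Sym2 V, IsOneSelection G f ∧ chromNum (oneRemoved G f) = m}

/-- The robust clique number `ω₁(G)`: the minimum of `ω(G_f)` over all 1-selections. -/
noncomputable def robustCliqueNum {V : Type*} (G : SimpleGraph V) : ℕ :=
  sInf {m : ℕ | ∃ f : V → Sym2 V, IsOneSelection G f ∧ (oneRemoved G f).cliqueNum = m}

/-- A set of vertices is independent if no two of its elements are adjacent. -/
def IsIndepVxSet {V : Type*} (G : SimpleGraph V) (s : Set V) : Prop :=
  s.Pairwise fun a b => ¬ G.Adj a b

/-- The independence number of `G`. -/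
noncomputable def indepNum {V : Type*} (G : SimpleGraph V) : ℕ :=
  sSup {n : ℕ | ∃ s : Finset V, IsIndepVxSet G ↑s ∧ s.card = n}

/-- The robust independence number `α₁(G)`: the maximum of `α(G_f)` over all 1-selections. -/
noncomputable def robustIndepNum {V : Type*} (G : SimpleGraph V) : ℕ :=
  sSup {m : ℕ | ∃ f : V → Sym2 V, IsOneSelection G f ∧ _root_.indepNum (oneRemoved G f) = m}

/-- `U` is robust independent in `G` if some 1-selection makes it independent. -/
def IsRobustIndep {V : Type*} (G : SimpleGraph V) (U : Set V) : Prop :=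
  ∃ f : V → Sym2 V, IsOneSelection G f ∧ IsIndepVxSet (oneRemoved G f) U

/-- Threshold graph. -/
def IsThresholdGraph {V : Type*} (G : SimpleGraph V) : Prop :=
  ∃ (h : ℝ) (g : V → ℝ), ∀ x y : V, x ≠ y → (G.Adj x y ↔ g x + g y > h)

/-- `G` is ω-unique: it has exactly one clique of order `ω(G)`. -/
def IsOmegaUnique {V : Type*} (G : SimpleGraph V) : Prop :=
  ∃! s : Finset V, G.IsNClique G.cliqueNum s

/-- Split graph: vertex set partitions into a clique and an independent set. -/
def IsSplitGraph {V : Type*} (G : SimpleGraph V) : Prop :=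
  ∃ A : Set V, G.IsClique A ∧ IsIndepVxSet G Aᶜ

/-- Chordal graph: no induced cycle of length greater than 3. -/
def IsChordalGraph {V : Type*} (G : SimpleGraph V) : Prop :=
  ∀ n : ℕ, 4 ≤ n → ¬ ∃ φ : Fin n ↪ V,
    ∀ i j : Fin n, G.Adj (φ i) (φ j) ↔ (SimpleGraph.cycleGraph n).Adj i j

/-- Interval graph: vertices can be assigned nonempty closed real intervals so that
two distinct vertices are adjacent iff their intervals intersect. -/
def IsIntervalGraph {V : Type*} (G : SimpleGraph V) : Prop :=
  ∃ a b : V → ℝ, (∀ v, a v ≤ b v) ∧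
    ∀ u v : V, u ≠ v →
      (G.Adj u v ↔ (Set.Icc (a u) (b u) ∩ Set.Icc (a v) (b v)).Nonempty)

/-- Unit interval graph: vertices can be labelled by reals so that two distinct
vertices are adjacent iff their labels are at distance less than 1. -/
def IsUnitIntervalGraph {V : Type*} (G : SimpleGraph V) : Prop :=
  ∃ r : V → ℝ, ∀ u v : V, u ≠ v → (G.Adj u v ↔ |r u - r v| < 1)

/-- Quasi-unicyclic: every connected component contains at most one cycle,
i.e. any two cycles lying in the same component have the same edge set. -/
def QuasiUnicyclic {V : Type*} [DecidableEq V] (G : SimpleGraph V) : Prop :=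
  ∀ (u v : V) (p : G.Walk u u) (q : G.Walk v v),
    p.IsCycle → q.IsCycle → G.Reachable u v →
      p.edges.toFinset = q.edges.toFinset

/-- The Kneser graph `KG(n,k)`. -/
def kneserGraph (n k : ℕ) : SimpleGraph {s : Finset (Fin n) // s.card = k} where
  Adj a b := a ≠ b ∧ Disjoint a.1 b.1
  symm := by
    constructor
    intro a b hab
    exact ⟨hab.1.symm, hab.2.symm⟩
  loopless := by
    constructor
    intro a ha
    exact ha.1 rfl

theorem chromNum_le {V : Type*} {G : SimpleGraph V} {m : ℕ} (h : G.Colorable m) :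
    chromNum G ≤ m := Nat.sInf_le h

theorem colorable_chromNum {V : Type*} [Fintype V] (G : SimpleGraph V) :
    G.Colorable (chromNum G) :=
  Nat.sInf_mem (⟨Fintype.card V, G.colorable_of_fintype⟩ :
    Set.Nonempty {n : ℕ | G.Colorable n})

theorem diag_sel {V : Type*} (G : SimpleGraph V) : IsOneSelection G (fun v => s(v, v)) :=
  fun v => by simp

theorem robustChromNum_le {V : Type*} {G : SimpleGraph V} {f : V → Sym2 V}
    (hf : IsOneSelection G f) : robustChromNum G ≤ chromNum (oneRemoved G f) :=
  Nat.sInf_le ⟨f, hf, rfl⟩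

theorem exists_optimal {V : Type*} (G : SimpleGraph V) :
    ∃ f, IsOneSelection G f ∧ chromNum (oneRemoved G f) = robustChromNum G :=
  Nat.sInf_mem (⟨_, (fun v => s(v, v)), diag_sel G, rfl⟩ :
    Set.Nonempty {m : ℕ | ∃ f, IsOneSelection G f ∧ chromNum (oneRemoved G f) = m})


abbrev MPVert (t : ℕ) (n : ℕ → ℕ) := Σ i : Fin t, Fin (n i)
abbrev MPG (t : ℕ) (n : ℕ → ℕ) : SimpleGraph (MPVert t n) :=
  completeMultipartiteGraph fun i : Fin t => Fin (n i)

theorem MPVert.ext' {t : ℕ} {n : ℕ → ℕ} {a b : MPVert t n}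
    (h1 : (a.1 : ℕ) = (b.1 : ℕ)) (h2 : (a.2 : ℕ) = (b.2 : ℕ)) : a = b := by
  obtain ⟨⟨i, hi⟩, ⟨p, hp⟩⟩ := a
  obtain ⟨⟨j, hj⟩, ⟨q, hq⟩⟩ := b
  dsimp at h1 h2
  subst h1; subst h2; rfl

theorem MP_adj {t : ℕ} {n : ℕ → ℕ} {a b : MPVert t n} :
    (MPG t n).Adj a b ↔ (a.1 : ℕ) ≠ (b.1 : ℕ) := by
  show a.1 ≠ b.1 ↔ _
  constructor
  · intro h h'; exact h (Fin.ext h')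
  · intro h h'; exact h (congrArg Fin.val h')

theorem mp_sel {t : ℕ} {n : ℕ → ℕ} {f : MPVert t n → Sym2 (MPVert t n)}
    (hf : IsOneSelection (MPG t n) f) {k : ℕ}
    (C : (oneRemoved (MPG t n) f).Coloring (Fin k)) {a b : MPVert t n}
    (hab : (a.1 : ℕ) ≠ (b.1 : ℕ)) (hc : C a = C b) :
    f a = s(a, b) ∨ f b = s(a, b) := by
  have hadj : (MPG t n).Adj a b := MP_adj.mpr hab
  have hnadj : ¬ (oneRemoved (MPG t n) f).Adj a b := by
    intro h; exact C.valid h hc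
  rw [oneRemoved, deleteEdges_adj] at hnadj
  push_neg at hnadj
  obtain ⟨z, hz⟩ := hnadj hadj
  have := hf z
  rw [hz, Sym2.mem_iff] at this
  rcases this with rfl | rfl
  · exact Or.inl hz
  · exact Or.inr hz

def phiF (t : ℕ) (n : ℕ → ℕ) (w : MPVert (t-2) (fun j => n (j+1))) : MPVert t n :=
  ⟨⟨(w.1 : ℕ) + 1, by have := w.1.isLt; omega⟩, w.2⟩

def psiF (t : ℕ) (n : ℕ → ℕ) (d : MPVert (t-2) (fun j => n (j+1))) (u : MPVert t n) :
    MPVert (t-2) (fun j => n (j+1)) :=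
  if h : 0 < (u.1 : ℕ) ∧ (u.1 : ℕ) < t - 1 then
    ⟨⟨(u.1 : ℕ) - 1, by omega⟩,
      Fin.cast (show n (u.1 : ℕ) = n ((u.1 : ℕ) - 1 + 1) from congrArg n (by omega)) u.2⟩
  else d

@[simp] theorem phiF_fst (t : ℕ) (n : ℕ → ℕ) (w : MPVert (t-2) (fun j => n (j+1))) :
    ((phiF t n w).1 : ℕ) = (w.1 : ℕ) + 1 := rfl

theorem psiF_phiF (t : ℕ) (n : ℕ → ℕ) (d : MPVert (t-2) (fun j => n (j+1)))
    (w : MPVert (t-2) (fun j => n (j+1))) : psiF t n d (phiF t n w) = w := by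
  have hw := w.1.isLt
  rw [psiF, dif_pos (by constructor <;> (simp only [phiF_fst]; omega))]
  apply MPVert.ext' (n := fun j => n (j+1))
  · simp [phiF]
  · simp [phiF]

theorem phiF_psiF (t : ℕ) (n : ℕ → ℕ) (d : MPVert (t-2) (fun j => n (j+1)))
    (u : MPVert t n) (h1 : 0 < (u.1 : ℕ)) (h2 : (u.1 : ℕ) < t - 1) :
    phiF t n (psiF t n d u) = u := by
  rw [psiF, dif_pos ⟨h1, h2⟩]
  apply MPVert.ext' (n := n)
  · simp [phiF]; omega
  · simp [phiF]

/-- Generic transfer scheme: from a lift `M` with retraction `R` construct a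
`(k-1)`-coloring of a one-removed middle graph. -/
theorem scheme (t : ℕ) (n : ℕ → ℕ) (ht : 3 ≤ t) (h1 : 1 ≤ n 1)
    {k : ℕ} {f : MPVert t n → Sym2 (MPVert t n)}
    (hf : IsOneSelection (MPG t n) f)
    (C : (oneRemoved (MPG t n) f).Coloring (Fin k)) (γ : Fin k)
    (M R : MPVert t n → MPVert t n)
    (hMR : ∀ u : MPVert t n, 0 < (u.1 : ℕ) → (u.1 : ℕ) < t - 1 → R (M u) = u)
    (hstar : ∀ u₁ u₂ : MPVert t n, 0 < (u₁.1 : ℕ) → (u₁.1 : ℕ) < t - 1 →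
      0 < (u₂.1 : ℕ) → (u₂.1 : ℕ) < t - 1 → (u₁.1 : ℕ) ≠ (u₂.1 : ℕ) →
      C (M u₁) = C (M u₂) → ((M u₁).1 : ℕ) ≠ ((M u₂).1 : ℕ))
    (hγ : ∀ u : MPVert t n, 0 < (u.1 : ℕ) → (u.1 : ℕ) < t - 1 → C (M u) ≠ γ) :
    ∃ g : MPVert (t-2) (fun j => n (j+1)) → Sym2 (MPVert (t-2) (fun j => n (j+1))),
      IsOneSelection (MPG (t-2) (fun j => n (j+1))) g ∧
      (oneRemoved (MPG (t-2) (fun j => n (j+1))) g).Colorable (k-1) := by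
  classical
  set d₀ : MPVert (t-2) (fun j => n (j+1)) :=
    ⟨⟨0, by omega⟩, ⟨0, show 0 < n 1 from h1⟩⟩ with hd₀
  set Ψ : MPVert t n → MPVert (t-2) (fun j => n (j+1)) := psiF t n d₀ with hΨ
  have hmid1 : ∀ w : MPVert (t-2) (fun j => n (j+1)), 0 < ((phiF t n w).1 : ℕ) := by
    intro w; simp
  have hmid2 : ∀ w : MPVert (t-2) (fun j => n (j+1)), ((phiF t n w).1 : ℕ) < t - 1 := by
    intro w; have := w.1.isLt; simp; omega
  set g : MPVert (t-2) (fun j => n (j+1)) → Sym2 (MPVert (t-2) (fun j => n (j+1))) :=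
    fun w => Sym2.map (fun z => Ψ (R z)) (f (M (phiF t n w))) with hg
  have hback : ∀ w, Ψ (R (M (phiF t n w))) = w := by
    intro w
    rw [hMR _ (hmid1 w) (hmid2 w), hΨ, psiF_phiF]
  have hgsel : IsOneSelection (MPG (t-2) (fun j => n (j+1))) g := by
    intro w
    rw [hg]
    exact Sym2.mem_map.mpr ⟨M (phiF t n w), hf _, hback w⟩
  refine ⟨g, hgsel, ?_⟩
  have hcard : Fintype.card {β : Fin k // β ≠ γ} = k - 1 := by
    simp [Fintype.card_subtype_compl]
  have col : (oneRemoved (MPG (t-2) (fun j => n (j+1))) g).Coloring {β : Fin k // β ≠ γ} := by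
    refine Coloring.mk (fun w => ⟨C (M (phiF t n w)), hγ _ (hmid1 w) (hmid2 w)⟩) ?_
    intro w₁ w₂ hadj hcol
    rw [oneRemoved, deleteEdges_adj] at hadj
    obtain ⟨hH, hnr⟩ := hadj
    have hfst : (w₁.1 : ℕ) ≠ (w₂.1 : ℕ) := MP_adj.mp hH
    have hceq : C (M (phiF t n w₁)) = C (M (phiF t n w₂)) := by
      simpa using congrArg Subtype.val hcol
    have hMfst := hstar _ _ (hmid1 w₁) (hmid2 w₁) (hmid1 w₂) (hmid2 w₂)
      (by simp; omega) hceq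
    have hrem := mp_sel hf C hMfst hceq
    apply hnr
    rcases hrem with h | h
    · refine ⟨w₁, ?_⟩
      show Sym2.map (fun z => Ψ (R z)) (f (M (phiF t n w₁))) = _
      rw [h, Sym2.map_pair_eq, hback w₁, hback w₂]
    · refine ⟨w₂, ?_⟩
      show Sym2.map (fun z => Ψ (R z)) (f (M (phiF t n w₂))) = _
      rw [h, Sym2.map_pair_eq, hback w₁, hback w₂, Sym2.eq_swap]
  exact hcard ▸ col.colorable

theorem lower_main (t : ℕ) (n : ℕ → ℕ) (ht : 3 ≤ t) (hfirst : n 0 = 1)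
    (hpos : ∀ i, i < t → 1 ≤ n i) (hmono : ∀ i j, i ≤ j → j < t → n i ≤ n j)
    (hlast : 3 ≤ n (t-1)) {k : ℕ} {f : MPVert t n → Sym2 (MPVert t n)}
    (hf : IsOneSelection (MPG t n) f)
    (C : (oneRemoved (MPG t n) f).Coloring (Fin k)) :
    ∃ g : MPVert (t-2) (fun j => n (j+1)) → Sym2 (MPVert (t-2) (fun j => n (j+1))),
      IsOneSelection (MPG (t-2) (fun j => n (j+1))) g ∧
      (oneRemoved (MPG (t-2) (fun j => n (j+1))) g).Colorable (k-1) := by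
  classical
  have h1n : 1 ≤ n 1 := hpos 1 (by omega)
  set x : MPVert t n := ⟨⟨0, by omega⟩, ⟨0, show 0 < n 0 by omega⟩⟩ with hxdef
  have hxfst : (x.1 : ℕ) = 0 := rfl
  set α := C x with hα
  have sel : ∀ a b : MPVert t n, (a.1 : ℕ) ≠ (b.1 : ℕ) → C a = C b →
      f a = s(a, b) ∨ f b = s(a, b) := fun a b => mp_sel hf C
  have fsteq : ∀ {a b : MPVert t n}, a = b → (a.1 : ℕ) = (b.1 : ℕ) := by
    rintro a b rfl; rfl
  have sndeq : ∀ {a b : MPVert t n}, a = b → (a.2 : ℕ) = (b.2 : ℕ) := by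
    rintro a b rfl; rfl
  have peq : ∀ {a b c d : MPVert t n}, s(a, b) = s(c, d) →
      (a = c ∧ b = d) ∨ (a = d ∧ b = c) := fun h => Sym2.eq_iff.mp h
  by_cases h0 : ∃ γ : Fin k, ∀ u : MPVert t n, 0 < (u.1 : ℕ) → (u.1 : ℕ) < t-1 → C u ≠ γ
  · obtain ⟨γ, hγ⟩ := h0
    exact scheme t n ht h1n hf C γ id id (fun u _ _ => rfl)
      (fun u₁ u₂ _ _ _ _ h _ => h) (fun u hu1 hu2 => hγ u hu1 hu2)
  push_neg at h0
  obtain ⟨w₀, hw₀1, hw₀2, hw₀c⟩ := h0 α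
  have S2 : ∀ v w w' : MPVert t n, (v.1 : ℕ) = t-1 → C v = α →
      0 < (w.1 : ℕ) → (w.1 : ℕ) < t-1 → C w = α →
      0 < (w'.1 : ℕ) → (w'.1 : ℕ) < t-1 → C w' = α → w ≠ w' → False := by
    intro v w w' hv1 hv2 hw1 hw2 hw3 hw'1 hw'2 hw'3 hne
    have E1 := sel v w (by omega) (hv2.trans hw3.symm)
    have E2 := sel v w' (by omega) (hv2.trans hw'3.symm)
    have E3 := sel x w (by rw [hxfst]; omega) (hα.symm.trans hw3.symm)
    have E4 := sel x w' (by rw [hxfst]; omega) (hα.symm.trans hw'3.symm)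
    have E5 := sel x v (by rw [hxfst]; omega) (hα.symm.trans hv2.symm)
    rcases E1 with h1 | h1
    · rcases E2 with h2 | h2
      · rcases peq (h1.symm.trans h2) with ⟨e1, e2⟩ | ⟨e1, e2⟩
        · exact hne e2
        · have := fsteq e1; omega
      · rcases E4 with h4 | h4
        · rcases E5 with h5 | h5
          · rcases peq (h4.symm.trans h5) with ⟨e1, e2⟩ | ⟨e1, e2⟩
            · have := fsteq e2; omega
            · have := fsteq e1; omega
          · rcases peq (h1.symm.trans h5) with ⟨e1, e2⟩ | ⟨e1, e2⟩
            · have := fsteq e1; omega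
            · have := fsteq e2; omega
        · rcases peq (h2.symm.trans h4) with ⟨e1, e2⟩ | ⟨e1, e2⟩
          · have := fsteq e1; omega
          · have := fsteq e1; omega
    · rcases E3 with h3 | h3
      · rcases E5 with h5 | h5
        · rcases peq (h3.symm.trans h5) with ⟨e1, e2⟩ | ⟨e1, e2⟩
          · have := fsteq e2; omega
          · have := fsteq e1; omega
        · rcases E2 with h2 | h2
          · rcases peq (h5.symm.trans h2) with ⟨e1, e2⟩ | ⟨e1, e2⟩
            · have := fsteq e1; omega
            · have := fsteq e1; omega
          · rcases E4 with h4 | h4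
            · rcases peq (h3.symm.trans h4) with ⟨e1, e2⟩ | ⟨e1, e2⟩
              · exact hne e2
              · have := fsteq e1; omega
            · rcases peq (h2.symm.trans h4) with ⟨e1, e2⟩ | ⟨e1, e2⟩
              · have := fsteq e1; omega
              · have := fsteq e2; omega
      · rcases peq (h1.symm.trans h3) with ⟨e1, e2⟩ | ⟨e1, e2⟩
        · have := fsteq e1; omega
        · have := fsteq e1; omega
  have S3 : ∀ v v' w : MPVert t n, (v.1 : ℕ) = t-1 → C v = α →
      (v'.1 : ℕ) = t-1 → C v' = α →
      0 < (w.1 : ℕ) → (w.1 : ℕ) < t-1 → C w = α → v ≠ v' → False := by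
    intro v v' w hv1 hv2 hv'1 hv'2 hw1 hw2 hw3 hvv'
    have E1 := sel v w (by omega) (hv2.trans hw3.symm)
    have E2 := sel v' w (by omega) (hv'2.trans hw3.symm)
    have E3 := sel x v (by rw [hxfst]; omega) (hα.symm.trans hv2.symm)
    have E4 := sel x v' (by rw [hxfst]; omega) (hα.symm.trans hv'2.symm)
    have E5 := sel x w (by rw [hxfst]; omega) (hα.symm.trans hw3.symm)
    rcases E1 with h1 | h1
    · rcases E3 with h3 | h3
      · rcases E4 with h4 | h4
        · rcases peq (h3.symm.trans h4) with ⟨e1, e2⟩ | ⟨e1, e2⟩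
          · exact hvv' e2
          · have := fsteq e1; omega
        · rcases E2 with h2 | h2
          · rcases peq (h4.symm.trans h2) with ⟨e1, e2⟩ | ⟨e1, e2⟩
            · have := fsteq e1; omega
            · have := fsteq e1; omega
          · rcases E5 with h5 | h5
            · rcases peq (h3.symm.trans h5) with ⟨e1, e2⟩ | ⟨e1, e2⟩
              · have := fsteq e2; omega
              · have := fsteq e1; omega
            · rcases peq (h2.symm.trans h5) with ⟨e1, e2⟩ | ⟨e1, e2⟩
              · have := fsteq e1; omega
              · have := fsteq e1; omega
      · rcases peq (h1.symm.trans h3) with ⟨e1, e2⟩ | ⟨e1, e2⟩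
        · have := fsteq e1; omega
        · have := fsteq e2; omega
    · rcases E2 with h2 | h2
      · rcases E4 with h4 | h4
        · rcases E3 with h3 | h3
          · rcases peq (h4.symm.trans h3) with ⟨e1, e2⟩ | ⟨e1, e2⟩
            · exact hvv' e2.symm
            · have := fsteq e1; omega
          · rcases E5 with h5 | h5
            · rcases peq (h4.symm.trans h5) with ⟨e1, e2⟩ | ⟨e1, e2⟩
              · have := fsteq e2; omega
              · have := fsteq e1; omega
            · rcases peq (h1.symm.trans h5) with ⟨e1, e2⟩ | ⟨e1, e2⟩
              · have := fsteq e1; omega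
              · have := fsteq e1; omega
        · rcases peq (h2.symm.trans h4) with ⟨e1, e2⟩ | ⟨e1, e2⟩
          · have := fsteq e1; omega
          · have := fsteq e2; omega
      · rcases peq (h1.symm.trans h2) with ⟨e1, e2⟩ | ⟨e1, e2⟩
        · exact hvv' e1
        · have := fsteq e1; omega
  have selx : ∀ y b : MPVert t n, 0 < (y.1 : ℕ) → (y.1 : ℕ) < t-1 → C y = α →
      f y = s(y, b) → 0 < (b.1 : ℕ) → f x = s(x, y) := by
    intro y b hy1 hy2 hyc hfy hb
    rcases sel x y (by rw [hxfst]; omega) (hα.symm.trans hyc.symm) with h | h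
    · exact h
    · rw [hfy] at h
      rcases peq h with ⟨e1, e2⟩ | ⟨e1, e2⟩
      · have := fsteq e1; omega
      · have := fsteq e2; omega
  have S4 : ∀ w₁ w₂ z₁ z₂ : MPVert t n,
      0 < (w₁.1 : ℕ) → (w₁.1 : ℕ) < t-1 → C w₁ = α →
      0 < (w₂.1 : ℕ) → (w₂.1 : ℕ) < t-1 → C w₂ = α →
      0 < (z₁.1 : ℕ) → (z₁.1 : ℕ) < t-1 → C z₁ = α →
      0 < (z₂.1 : ℕ) → (z₂.1 : ℕ) < t-1 → C z₂ = α →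
      (w₁.1 : ℕ) ≠ (w₂.1 : ℕ) → (z₁.1 : ℕ) ≠ (z₂.1 : ℕ) →
      s(w₁, w₂) ≠ s(z₁, z₂) → False := by
    intro w₁ w₂ z₁ z₂ ha1 ha2 ha3 hb1 hb2 hb3 hc1 hc2 hc3 hd1 hd2 hd3 hp1 hp2 hpp
    have ceq1 : C w₁ = C w₂ := ha3.trans hb3.symm
    have ceq2 : C z₁ = C z₂ := hc3.trans hd3.symm
    rcases sel w₁ w₂ hp1 ceq1 with h1 | h1 <;> rcases sel z₁ z₂ hp2 ceq2 with h2 | h2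
    · have hxa := selx w₁ w₂ ha1 ha2 ha3 h1 hb1
      have hxb := selx z₁ z₂ hc1 hc2 hc3 h2 hd1
      rcases peq (hxa.symm.trans hxb) with ⟨e1, e2⟩ | ⟨e1, e2⟩
      · exact hpp (h1.symm.trans (e2 ▸ h2))
      · have := fsteq e1; omega
    · have hxa := selx w₁ w₂ ha1 ha2 ha3 h1 hb1
      have hxb := selx z₂ z₁ hd1 hd2 hd3 (h2.trans Sym2.eq_swap) hc1
      rcases peq (hxa.symm.trans hxb) with ⟨e1, e2⟩ | ⟨e1, e2⟩
      · exact hpp (h1.symm.trans (e2 ▸ h2))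
      · have := fsteq e1; omega
    · have hxa := selx w₂ w₁ hb1 hb2 hb3 (h1.trans Sym2.eq_swap) ha1
      have hxb := selx z₁ z₂ hc1 hc2 hc3 h2 hd1
      rcases peq (hxa.symm.trans hxb) with ⟨e1, e2⟩ | ⟨e1, e2⟩
      · exact hpp (h1.symm.trans (e2 ▸ h2))
      · have := fsteq e1; omega
    · have hxa := selx w₂ w₁ hb1 hb2 hb3 (h1.trans Sym2.eq_swap) ha1
      have hxb := selx z₂ z₁ hd1 hd2 hd3 (h2.trans Sym2.eq_swap) hc1
      rcases peq (hxa.symm.trans hxb) with ⟨e1, e2⟩ | ⟨e1, e2⟩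
      · exact hpp (h1.symm.trans (e2 ▸ h2))
      · have := fsteq e1; omega
  by_cases hA : ∃ v : MPVert t n, (v.1 : ℕ) = t-1 ∧ C v = α
  · obtain ⟨v, hv1, hv2⟩ := hA
    have Tuniq : ∀ w : MPVert t n, 0 < (w.1 : ℕ) → (w.1 : ℕ) < t-1 → C w = α → w = w₀ := by
      intro w h1 h2 h3
      by_contra hne
      exact S2 v w w₀ hv1 hv2 h1 h2 h3 hw₀1 hw₀2 hw₀c hne
    have vuniq : ∀ v' : MPVert t n, (v'.1 : ℕ) = t-1 → C v' = α → v' = v := by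
      intro v' h1 h2
      by_contra hne
      exact S3 v' v w₀ h1 h2 hv1 hv2 hw₀1 hw₀2 hw₀c hne
    have hj' : (if (v.2 : ℕ) = 0 then 1 else 0) < n (t-1) := by
      by_cases hz : (v.2 : ℕ) = 0 <;> simp [hz] <;> omega
    set v' : MPVert t n := ⟨⟨t-1, by omega⟩, ⟨if (v.2 : ℕ) = 0 then 1 else 0,
      show (if (v.2 : ℕ) = 0 then 1 else 0) < n (t-1) from hj'⟩⟩ with hv'def
    have hv'1 : (v'.1 : ℕ) = t-1 := rfl
    have hv'snd : (v'.2 : ℕ) = if (v.2 : ℕ) = 0 then 1 else 0 := rfl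
    have hv'v : v' ≠ v := by
      intro h
      have h2 := sndeq h
      rw [hv'snd] at h2
      by_cases hz : (v.2 : ℕ) = 0
      · rw [if_pos hz] at h2; omega
      · rw [if_neg hz] at h2; omega
    have hCv' : C v' ≠ α := fun h => hv'v (vuniq v' hv'1 h)
    set M : MPVert t n → MPVert t n :=
      fun u => if 0 < (u.1 : ℕ) ∧ (u.1 : ℕ) < t-1 ∧ C u = α then v' else u with hM
    set R : MPVert t n → MPVert t n := fun z => if z = v' then w₀ else z with hR
    have hMmoved : ∀ u : MPVert t n, 0 < (u.1 : ℕ) → (u.1 : ℕ) < t-1 → C u = α →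
        M u = v' := fun u h1 h2 h3 => by
      simp only [hM]; exact if_pos ⟨h1, h2, h3⟩
    have hMun : ∀ u : MPVert t n, C u ≠ α → M u = u := fun u hc => by
      simp only [hM]; exact if_neg (fun h => hc h.2.2)
    have hRv' : R v' = w₀ := by simp [hR]
    have hRmid : ∀ u : MPVert t n, (u.1 : ℕ) < t-1 → R u = u := fun u h => by
      have e : u ≠ v' := fun e => by have := fsteq e; rw [hv'1] at this; omega
      simp [hR, e]
    apply scheme t n ht h1n hf C α M R
    · intro u h1 h2
      by_cases hc : C u = α
      · rw [hMmoved u h1 h2 hc, hRv']; exact (Tuniq u h1 h2 hc).symm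
      · rw [hMun u hc, hRmid u h2]
    · intro u₁ u₂ h11 h12 h21 h22 hne hcc
      by_cases hc1 : C u₁ = α <;> by_cases hc2 : C u₂ = α
      · exact absurd (fsteq ((Tuniq u₁ h11 h12 hc1).trans
          (Tuniq u₂ h21 h22 hc2).symm)) hne
      · rw [hMmoved u₁ h11 h12 hc1, hMun u₂ hc2, hv'1]; omega
      · rw [hMun u₁ hc1, hMmoved u₂ h21 h22 hc2, hv'1]; omega
      · rw [hMun u₁ hc1, hMun u₂ hc2]; exact hne
    · intro u h1 h2
      by_cases hc : C u = α
      · rw [hMmoved u h1 h2 hc]; exact hCv'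
      · rw [hMun u hc]; exact hc
  push_neg at hA
  by_cases hsp : ∃ w w' : MPVert t n, 0 < (w.1 : ℕ) ∧ (w.1 : ℕ) < t-1 ∧ C w = α ∧
      0 < (w'.1 : ℕ) ∧ (w'.1 : ℕ) < t-1 ∧ C w' = α ∧ (w.1 : ℕ) ≠ (w'.1 : ℕ)
  · obtain ⟨y, y', hy1, hy2, hy3, hy'1, hy'2, hy'3, hyy⟩ := hsp
    have hyne : y ≠ y' := fun h => hyy (fsteq h)
    have Tsub : ∀ z : MPVert t n, 0 < (z.1 : ℕ) → (z.1 : ℕ) < t-1 → C z = α →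
        z = y ∨ z = y' := by
      intro z h1 h2 h3
      by_contra hcon
      push_neg at hcon
      obtain ⟨hzy, hzy'⟩ := hcon
      by_cases hzp : (z.1 : ℕ) = (y.1 : ℕ)
      · refine S4 z y' y y' h1 h2 h3 hy'1 hy'2 hy'3 hy1 hy2 hy3 hy'1 hy'2 hy'3
          (by omega) hyy ?_
        intro hp
        rcases peq hp with ⟨e1, e2⟩ | ⟨e1, e2⟩
        · exact hzy e1
        · exact hzy' e1
      · refine S4 z y y y' h1 h2 h3 hy1 hy2 hy3 hy1 hy2 hy3 hy'1 hy'2 hy'3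
          hzp hyy ?_
        intro hp
        rcases peq hp with ⟨e1, e2⟩ | ⟨e1, e2⟩
        · exact hzy e1
        · exact hzy' e1
    by_cases h2c : ∃ v₁ v₂ : MPVert t n, (v₁.1 : ℕ) = t-1 ∧ (v₂.1 : ℕ) = t-1 ∧ C v₁ ≠ C v₂
    · obtain ⟨v₁, v₂, hva, hvb, hvc⟩ := h2c
      have hv12 : v₂ ≠ v₁ := fun h => hvc (congrArg C h).symm
      set M : MPVert t n → MPVert t n :=
        fun u => if u = y then v₁ else if u = y' then v₂ else u with hM
      set R : MPVert t n → MPVert t n :=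
        fun z => if z = v₁ then y else if z = v₂ then y' else z with hR
      have hMy : M y = v₁ := by simp [hM]
      have hMy' : M y' = v₂ := by simp [hM, hyne.symm]
      have hMu : ∀ u : MPVert t n, u ≠ y → u ≠ y' → M u = u := fun u e1 e2 => by
        simp [hM, e1, e2]
      have hRv₁ : R v₁ = y := by simp [hR]
      have hRv₂ : R v₂ = y' := by simp [hR, hv12]
      have hRmid : ∀ u : MPVert t n, (u.1 : ℕ) < t-1 → R u = u := fun u h => by
        have e1 : u ≠ v₁ := fun e => by have := fsteq e; rw [hva] at this; omega
        have e2 : u ≠ v₂ := fun e => by have := fsteq e; rw [hvb] at this; omega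
        simp [hR, e1, e2]
      apply scheme t n ht h1n hf C α M R
      · intro u h1 h2
        by_cases e1 : u = y
        · rw [e1, hMy, hRv₁]
        · by_cases e2 : u = y'
          · rw [e2, hMy', hRv₂]
          · rw [hMu u e1 e2, hRmid u h2]
      · intro u₁ u₂ h11 h12 h21 h22 hne hcc
        by_cases e1 : u₁ = y
        · by_cases e3 : u₂ = y
          · exact absurd (show (u₁.1 : ℕ) = (u₂.1 : ℕ) by rw [e1, e3]) hne
          · by_cases e4 : u₂ = y'
            · rw [e1, e4, hMy, hMy'] at hcc; exact absurd hcc hvc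
            · rw [e1, hMy, hMu u₂ e3 e4, hva]; omega
        · by_cases e2 : u₁ = y'
          · by_cases e3 : u₂ = y
            · rw [e2, e3, hMy', hMy] at hcc; exact absurd hcc.symm hvc
            · by_cases e4 : u₂ = y'
              · exact absurd (show (u₁.1 : ℕ) = (u₂.1 : ℕ) by rw [e2, e4]) hne
              · rw [e2, hMy', hMu u₂ e3 e4, hvb]; omega
          · by_cases e3 : u₂ = y
            · rw [e3, hMy, hMu u₁ e1 e2, hva]; omega
            · by_cases e4 : u₂ = y'
              · rw [e4, hMy', hMu u₁ e1 e2, hvb]; omega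
              · rw [hMu u₁ e1 e2, hMu u₂ e3 e4]; exact hne
      · intro u h1 h2
        by_cases e1 : u = y
        · rw [e1, hMy]; exact hA v₁ hva
        · by_cases e2 : u = y'
          · rw [e2, hMy']; exact hA v₂ hvb
          · rw [hMu u e1 e2]
            intro hc
            rcases Tsub u h1 h2 hc with h | h
            · exact e1 h
            · exact e2 h
    · -- all of the last part gets a single colour β, and only one mid vertex has colour β
      push_neg at h2c
      set v₁ : MPVert t n := ⟨⟨t-1, by omega⟩, ⟨0, show 0 < n (t-1) by omega⟩⟩ with hv₁def
      set v₂ : MPVert t n := ⟨⟨t-1, by omega⟩, ⟨1, show 1 < n (t-1) by omega⟩⟩ with hv₂def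
      set v₃ : MPVert t n := ⟨⟨t-1, by omega⟩, ⟨2, show 2 < n (t-1) by omega⟩⟩ with hv₃def
      have hva : (v₁.1 : ℕ) = t-1 := rfl
      have hvb : (v₂.1 : ℕ) = t-1 := rfl
      have hvc : (v₃.1 : ℕ) = t-1 := rfl
      have hsa : (v₁.2 : ℕ) = 0 := rfl
      have hsb : (v₂.2 : ℕ) = 1 := rfl
      have hsc : (v₃.2 : ℕ) = 2 := rfl
      set β := C v₁ with hβ
      have hβα : β ≠ α := hA v₁ hva
      have hmonoC : ∀ z : MPVert t n, (z.1 : ℕ) = t-1 → C z = β := fun z hz =>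
        h2c z v₁ hz hva
      obtain ⟨q, hq1, hq2, hq3⟩ := h0 β
      have key : ∀ p : MPVert t n, 0 < (p.1 : ℕ) → (p.1 : ℕ) < t-1 → C p = β →
          (f v₁ = s(v₁, p) ∧ f v₂ = s(v₂, p)) ∨ (f v₁ = s(v₁, p) ∧ f v₃ = s(v₃, p)) ∨
          (f v₂ = s(v₂, p) ∧ f v₃ = s(v₃, p)) := by
        intro p p1 p2 p3
        have E1 := sel v₁ p (by rw [hva]; omega) (hβ.symm.trans p3.symm)
        have E2 := sel v₂ p (by rw [hvb]; omega) ((hmonoC v₂ hvb).trans p3.symm)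
        have E3 := sel v₃ p (by rw [hvc]; omega) ((hmonoC v₃ hvc).trans p3.symm)
        rcases E1 with h1 | h1
        · rcases E2 with h2 | h2
          · exact Or.inl ⟨h1, h2⟩
          · rcases E3 with h3 | h3
            · exact Or.inr (Or.inl ⟨h1, h3⟩)
            · exfalso
              rcases peq (h2.symm.trans h3) with ⟨e1, e2⟩ | ⟨e1, e2⟩
              · have := sndeq e1; omega
              · have := fsteq e1; omega
        · rcases E2 with h2 | h2
          · rcases E3 with h3 | h3
            · exact Or.inr (Or.inr ⟨h2, h3⟩)
            · exfalso
              rcases peq (h1.symm.trans h3) with ⟨e1, e2⟩ | ⟨e1, e2⟩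
              · have := sndeq e1; omega
              · have := fsteq e1; omega
          · exfalso
            rcases peq (h1.symm.trans h2) with ⟨e1, e2⟩ | ⟨e1, e2⟩
            · have := sndeq e1; omega
            · have := fsteq e1; omega
      have quniq : ∀ p : MPVert t n, 0 < (p.1 : ℕ) → (p.1 : ℕ) < t-1 → C p = β → p = q := by
        intro p p1 p2 p3
        by_contra hpq
        have final : ∀ vi : MPVert t n, (vi.1 : ℕ) = t-1 →
            f vi = s(vi, p) → f vi = s(vi, q) → False := by
          intro vi hvi ha hb
          rcases peq (ha.symm.trans hb) with ⟨e1, e2⟩ | ⟨e1, e2⟩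
          · exact hpq e2
          · have := fsteq e1; omega
        rcases key p p1 p2 p3 with ⟨a1, a2⟩ | ⟨a1, a2⟩ | ⟨a1, a2⟩ <;>
          rcases key q hq1 hq2 hq3 with ⟨b1, b2⟩ | ⟨b1, b2⟩ | ⟨b1, b2⟩
        · exact final v₁ hva a1 b1
        · exact final v₁ hva a1 b1
        · exact final v₂ hvb a2 b1
        · exact final v₁ hva a1 b1
        · exact final v₁ hva a1 b1
        · exact final v₃ hvc a2 b2
        · exact final v₂ hvb a1 b2
        · exact final v₃ hvc a2 b2
        · exact final v₂ hvb a1 b1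
      -- manual construction of the selection and colouring
      set d₀ : MPVert (t-2) (fun j => n (j+1)) :=
        ⟨⟨0, by omega⟩, ⟨0, show 0 < n 1 by omega⟩⟩ with hd₀
      set Ψ : MPVert t n → MPVert (t-2) (fun j => n (j+1)) := psiF t n d₀ with hΨ
      set yH := Ψ y with hyH
      set y'H := Ψ y' with hy'H
      set qH := Ψ q with hqH
      have hyB : phiF t n yH = y := phiF_psiF t n d₀ y hy1 hy2
      have hy'B : phiF t n y'H = y' := phiF_psiF t n d₀ y' hy'1 hy'2
      have hqB : phiF t n qH = q := phiF_psiF t n d₀ q hq1 hq2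
      have hyHy'H : yH ≠ y'H := fun h => hyne (by rw [← hyB, h]; exact hy'B)
      have hqy : q ≠ y := fun h => hβα (by rw [← hq3, h]; exact hy3)
      have hqy' : q ≠ y' := fun h => hβα (by rw [← hq3, h]; exact hy'3)
      have hqHyH : qH ≠ yH := fun h => hqy (by rw [← hqB, h]; exact hyB)
      have hqHy'H : qH ≠ y'H := fun h => hqy' (by rw [← hqB, h]; exact hy'B)
      set g : MPVert (t-2) (fun j => n (j+1)) → Sym2 (MPVert (t-2) (fun j => n (j+1))) :=
        fun w => if w = yH then s(yH, y'H) else if w = y'H then s(y'H, qH)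
          else if w = qH then s(qH, yH) else Sym2.map Ψ (f (phiF t n w)) with hg
      refine ⟨g, ?_, ?_⟩
      · intro w
        simp only [hg]
        split_ifs with e1 e2 e3
        · rw [e1] at *; exact Sym2.mem_iff.mpr (Or.inl rfl)
        · rw [e2] at *; exact Sym2.mem_iff.mpr (Or.inl rfl)
        · rw [e3] at *; exact Sym2.mem_iff.mpr (Or.inl rfl)
        · exact Sym2.mem_map.mpr ⟨phiF t n w, hf _, psiF_phiF t n d₀ w⟩
      · have hcard : Fintype.card {c : Fin k // c ≠ α} = k - 1 := by
          simp [Fintype.card_subtype_compl]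
        have hval : ∀ w, w ≠ yH → w ≠ y'H → C (phiF t n w) ≠ α := by
          intro w e1 e2 hcon
          rcases Tsub (phiF t n w) (by rw [phiF_fst]; omega)
            (by have := w.1.isLt; rw [phiF_fst]; omega) hcon with h | h
          · exact e1 ((psiF_phiF t n d₀ w).symm.trans (congrArg Ψ h))
          · exact e2 ((psiF_phiF t n d₀ w).symm.trans (congrArg Ψ h))
        set D : MPVert (t-2) (fun j => n (j+1)) → {c : Fin k // c ≠ α} := fun w =>
          if h : w = yH ∨ w = y'H then ⟨β, hβα⟩
          else ⟨C (phiF t n w), hval w (fun e => h (Or.inl e)) (fun e => h (Or.inr e))⟩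
          with hD
        have colile : (oneRemoved (MPG (t-2) (fun j => n (j+1))) g).Coloring
            {c : Fin k // c ≠ α} := by
          refine Coloring.mk D ?_
          intro w₁ w₂ hadj hcol
          rw [oneRemoved, deleteEdges_adj] at hadj
          obtain ⟨hH, hnr⟩ := hadj
          have hfst : (w₁.1 : ℕ) ≠ (w₂.1 : ℕ) := MP_adj.mp hH
          have hw12 : w₁ ≠ w₂ := fun h => hfst (by rw [h])
          have hmid1 : 0 < ((phiF t n w₁).1 : ℕ) := by rw [phiF_fst]; omega
          have hmid2 : ((phiF t n w₁).1 : ℕ) < t-1 := by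
            have := w₁.1.isLt; rw [phiF_fst]; omega
          have hmid3 : 0 < ((phiF t n w₂).1 : ℕ) := by rw [phiF_fst]; omega
          have hmid4 : ((phiF t n w₂).1 : ℕ) < t-1 := by
            have := w₂.1.isLt; rw [phiF_fst]; omega
          by_cases m1 : w₁ = yH ∨ w₁ = y'H <;> by_cases m2 : w₂ = yH ∨ w₂ = y'H
          · apply hnr
            rcases m1 with e1 | e1 <;> rcases m2 with e2 | e2
            · exact (hw12 (e1.trans e2.symm)).elim
            · refine ⟨yH, ?_⟩
              simp only [hg]
              rw [if_pos trivial, e1, e2]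
            · refine ⟨yH, ?_⟩
              simp only [hg]
              rw [if_pos trivial, e1, e2]
              exact Sym2.eq_swap
            · exact (hw12 (e1.trans e2.symm)).elim
          · have hcv : C (phiF t n w₂) = β := by
              have h5 := congrArg Subtype.val hcol
              simp only [hD] at h5
              rw [dif_pos m1, dif_neg m2] at h5
              exact h5.symm
            have hw₂q : w₂ = qH :=
              (psiF_phiF t n d₀ w₂).symm.trans
                (congrArg Ψ (quniq (phiF t n w₂) hmid3 hmid4 hcv))
            apply hnr
            rcases m1 with e1 | e1
            · refine ⟨qH, ?_⟩
              simp only [hg]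
              rw [if_neg hqHyH, if_neg hqHy'H, if_pos trivial, e1, hw₂q]
              exact Sym2.eq_swap
            · refine ⟨y'H, ?_⟩
              simp only [hg]
              rw [if_neg (fun h => hyHy'H h.symm), if_pos trivial, e1, hw₂q]
          · have hcv : C (phiF t n w₁) = β := by
              have h5 := congrArg Subtype.val hcol
              simp only [hD] at h5
              rw [dif_neg m1, dif_pos m2] at h5
              exact h5
            have hw₁q : w₁ = qH :=
              (psiF_phiF t n d₀ w₁).symm.trans
                (congrArg Ψ (quniq (phiF t n w₁) hmid1 hmid2 hcv))
            apply hnr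
            rcases m2 with e2 | e2
            · refine ⟨qH, ?_⟩
              simp only [hg]
              rw [if_neg hqHyH, if_neg hqHy'H, if_pos trivial, e2, hw₁q]
            · refine ⟨y'H, ?_⟩
              simp only [hg]
              rw [if_neg (fun h => hyHy'H h.symm), if_pos trivial, e2, hw₁q]
              exact Sym2.eq_swap
          · have hceq : C (phiF t n w₁) = C (phiF t n w₂) := by
              have h5 := congrArg Subtype.val hcol
              simp only [hD] at h5
              rw [dif_neg m1, dif_neg m2] at h5
              exact h5
            by_cases hq1' : w₁ = qH
            · exfalso
              apply hw12
              have hcv : C (phiF t n w₂) = β := by rw [← hceq, hq1', hqB, hq3]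
              rw [hq1']
              exact ((psiF_phiF t n d₀ w₂).symm.trans
                (congrArg Ψ (quniq (phiF t n w₂) hmid3 hmid4 hcv))).symm
            by_cases hq2' : w₂ = qH
            · exfalso
              apply hw12
              have hcv : C (phiF t n w₁) = β := by rw [hceq, hq2', hqB, hq3]
              rw [hq2']
              exact (psiF_phiF t n d₀ w₁).symm.trans
                (congrArg Ψ (quniq (phiF t n w₁) hmid1 hmid2 hcv))
            have hsel2 := sel (phiF t n w₁) (phiF t n w₂)
              (by rw [phiF_fst, phiF_fst]; omega) hceq
            apply hnr
            rcases hsel2 with h | h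
            · refine ⟨w₁, ?_⟩
              simp only [hg]
              rw [if_neg (fun e => m1 (Or.inl e)), if_neg (fun e => m1 (Or.inr e)),
                if_neg hq1', h, Sym2.map_pair_eq, hΨ, psiF_phiF t n d₀ w₁,
                psiF_phiF t n d₀ w₂]
            · refine ⟨w₂, ?_⟩
              simp only [hg]
              rw [if_neg (fun e => m2 (Or.inl e)), if_neg (fun e => m2 (Or.inr e)),
                if_neg hq2', h, Sym2.map_pair_eq, hΨ, psiF_phiF t n d₀ w₁,
                psiF_phiF t n d₀ w₂]
        exact hcard ▸ colile.colorable
  · -- concentrated case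
    push_neg at hsp
    have hconc : ∀ u : MPVert t n, 0 < (u.1 : ℕ) → (u.1 : ℕ) < t-1 → C u = α →
        (u.1 : ℕ) = (w₀.1 : ℕ) := fun u h1 h2 h3 =>
      hsp u w₀ h1 h2 h3 hw₀1 hw₀2 hw₀c
    set M : MPVert t n → MPVert t n := fun u =>
      if h : 0 < (u.1 : ℕ) ∧ (u.1 : ℕ) < t-1 ∧ C u = α then
        ⟨⟨t-1, by omega⟩, ⟨(u.2 : ℕ), by
          show (u.2 : ℕ) < n (t-1)
          obtain ⟨ha, hb, -⟩ := h
          have h5 := u.2.isLt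
          have h6 := hmono (u.1 : ℕ) (t-1) (by omega) (by omega)
          omega⟩⟩
      else u with hM
    set R : MPVert t n → MPVert t n := fun z =>
      if h : (z.1 : ℕ) = t-1 ∧ (z.2 : ℕ) < n (w₀.1 : ℕ) then ⟨w₀.1, ⟨(z.2 : ℕ), h.2⟩⟩
      else z with hR
    have hMval : ∀ (u : MPVert t n) (ha : 0 < (u.1 : ℕ)) (hb : (u.1 : ℕ) < t-1)
        (hc : C u = α), M u = ⟨⟨t-1, by omega⟩, ⟨(u.2 : ℕ), by
          show (u.2 : ℕ) < n (t-1)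
          have h5 := u.2.isLt
          have h6 := hmono (u.1 : ℕ) (t-1) (by omega) (by omega)
          omega⟩⟩ := by
      intro u ha hb hc
      simp only [hM]
      rw [dif_pos ⟨ha, hb, hc⟩]
    have hMmoved : ∀ u : MPVert t n, 0 < (u.1 : ℕ) → (u.1 : ℕ) < t-1 → C u = α →
        ((M u).1 : ℕ) = t-1 ∧ ((M u).2 : ℕ) = (u.2 : ℕ) := by
      intro u h1 h2 h3
      exact ⟨by rw [hMval u h1 h2 h3], by rw [hMval u h1 h2 h3]⟩
    have hMun : ∀ u : MPVert t n, ¬ C u = α → M u = u := fun u hc => by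
      simp only [hM]
      rw [dif_neg (fun h => hc h.2.2)]
    apply scheme t n ht h1n hf C α M R
    · intro u h1 h2
      by_cases hc : C u = α
      · obtain ⟨m1, m2⟩ := hMmoved u h1 h2 hc
        have hcu := hconc u h1 h2 hc
        have hlt2 : ((M u).2 : ℕ) < n (w₀.1 : ℕ) := by
          rw [m2]
          have h5 := u.2.isLt
          have h6 := congrArg n hcu
          omega
        simp only [hR]
        rw [dif_pos ⟨m1, hlt2⟩]
        apply MPVert.ext' (n := n)
        · exact hcu.symm
        · exact m2
      · rw [hMun u hc]
        simp only [hR]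
        rw [dif_neg (fun h => by omega)]
    · intro u₁ u₂ h11 h12 h21 h22 hne hcc
      by_cases hc1 : C u₁ = α <;> by_cases hc2 : C u₂ = α
      · exact absurd ((hconc u₁ h11 h12 hc1).trans (hconc u₂ h21 h22 hc2).symm) hne
      · rw [(hMmoved u₁ h11 h12 hc1).1, hMun u₂ hc2]; omega
      · rw [hMun u₁ hc1, (hMmoved u₂ h21 h22 hc2).1]; omega
      · rw [hMun u₁ hc1, hMun u₂ hc2]; exact hne
    · intro u h1 h2
      by_cases hc : C u = α
      · intro hcon
        exact hA (M u) (hMmoved u h1 h2 hc).1 hcon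
      · rw [hMun u hc]; exact hc

theorem upper_main (t : ℕ) (n : ℕ → ℕ) (ht : 3 ≤ t) (hfirst : n 0 = 1)
    (hpos : ∀ i, i < t → 1 ≤ n i) {m : ℕ}
    {g : MPVert (t-2) (fun j => n (j+1)) → Sym2 (MPVert (t-2) (fun j => n (j+1)))}
    (hg : IsOneSelection (MPG (t-2) (fun j => n (j+1))) g)
    (D : (oneRemoved (MPG (t-2) (fun j => n (j+1))) g).Coloring (Fin m)) :
    ∃ f, IsOneSelection (MPG t n) f ∧ (oneRemoved (MPG t n) f).Colorable (m+1) := by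
  classical
  have h1n : 1 ≤ n 1 := hpos 1 (by omega)
  set x : MPVert t n := ⟨⟨0, by omega⟩, ⟨0, show 0 < n 0 by omega⟩⟩ with hx
  set d₀ : MPVert (t-2) (fun j => n (j+1)) :=
    ⟨⟨0, by omega⟩, ⟨0, show 0 < n 1 by omega⟩⟩ with hd₀
  set Ψ : MPVert t n → MPVert (t-2) (fun j => n (j+1)) := psiF t n d₀ with hΨ
  set f : MPVert t n → Sym2 (MPVert t n) := fun u =>
    if (u.1 : ℕ) = t-1 then s(u, x)
    else if h : 0 < (u.1 : ℕ) ∧ (u.1 : ℕ) < t-1 then Sym2.map (phiF t n) (g (Ψ u))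
    else s(u, u) with hfdef
  have hzero : ∀ u : MPVert t n, (u.1 : ℕ) = 0 → u = x := by
    intro u hu
    apply MPVert.ext' (n := n)
    · exact hu
    · show (u.2 : ℕ) = 0
      have h5 := u.2.isLt
      have h6 := congrArg n hu
      omega
  have hfsel : IsOneSelection (MPG t n) f := by
    intro u
    simp only [hfdef]
    split_ifs with e1 e2
    · exact Sym2.mem_iff.mpr (Or.inl rfl)
    · exact Sym2.mem_map.mpr ⟨Ψ u, hg _, phiF_psiF t n d₀ u e2.1 e2.2⟩
    · exact Sym2.mem_iff.mpr (Or.inl rfl)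
  refine ⟨f, hfsel, ?_⟩
  have hfstΨ : ∀ u : MPVert t n, 0 < (u.1 : ℕ) → (u.1 : ℕ) < t-1 →
      ((Ψ u).1 : ℕ) = (u.1 : ℕ) - 1 := by
    intro u h1 h2
    simp only [hΨ, psiF]
    rw [dif_pos ⟨h1, h2⟩]
  have col : (oneRemoved (MPG t n) f).Coloring (Fin (m+1)) := by
    refine Coloring.mk (fun u =>
      if h : 0 < (u.1 : ℕ) ∧ (u.1 : ℕ) < t-1 then (D (Ψ u)).succ else 0) ?_
    intro a b hadj hcol
    beta_reduce at hcol
    rw [oneRemoved, deleteEdges_adj] at hadj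
    obtain ⟨hG, hnr⟩ := hadj
    have hab : (a.1 : ℕ) ≠ (b.1 : ℕ) := MP_adj.mp hG
    by_cases ma : 0 < (a.1 : ℕ) ∧ (a.1 : ℕ) < t-1
      <;> by_cases mb : 0 < (b.1 : ℕ) ∧ (b.1 : ℕ) < t-1
    · rw [dif_pos ma, dif_pos mb] at hcol
      have hD : D (Ψ a) = D (Ψ b) := Fin.succ_injective _ hcol
      have hfa := hfstΨ a ma.1 ma.2
      have hfb := hfstΨ b mb.1 mb.2
      have hHadj : (MPG (t-2) (fun j => n (j+1))).Adj (Ψ a) (Ψ b) :=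
        MP_adj.mpr (by rw [hfa, hfb]; omega)
      have hnadj : ¬ (oneRemoved (MPG (t-2) (fun j => n (j+1))) g).Adj (Ψ a) (Ψ b) :=
        fun hh => D.valid hh hD
      rw [oneRemoved, deleteEdges_adj] at hnadj
      push_neg at hnadj
      obtain ⟨z, hz⟩ := hnadj hHadj
      have hzmem := hg z
      rw [hz, Sym2.mem_iff] at hzmem
      apply hnr
      rcases hzmem with rfl | rfl
      · refine ⟨a, ?_⟩
        simp only [hfdef]
        rw [if_neg (by omega), dif_pos ma, hz, Sym2.map_pair_eq,
          phiF_psiF t n d₀ a ma.1 ma.2, phiF_psiF t n d₀ b mb.1 mb.2]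
      · refine ⟨b, ?_⟩
        simp only [hfdef]
        rw [if_neg (by omega), dif_pos mb, hz, Sym2.map_pair_eq,
          phiF_psiF t n d₀ a ma.1 ma.2, phiF_psiF t n d₀ b mb.1 mb.2]
    · rw [dif_pos ma, dif_neg mb] at hcol
      exact Fin.succ_ne_zero _ hcol
    · rw [dif_neg ma, dif_pos mb] at hcol
      exact Fin.succ_ne_zero _ hcol.symm
    · have ha0 : (a.1 : ℕ) = 0 ∨ (a.1 : ℕ) = t-1 := by
        have := a.1.isLt; omega
      have hb0 : (b.1 : ℕ) = 0 ∨ (b.1 : ℕ) = t-1 := by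
        have := b.1.isLt; omega
      rcases ha0 with h1 | h1 <;> rcases hb0 with h2 | h2
      · exact hab (h1.trans h2.symm)
      · apply hnr
        refine ⟨b, ?_⟩
        simp only [hfdef]
        rw [if_pos h2, hzero a h1]
        exact Sym2.eq_swap
      · apply hnr
        refine ⟨a, ?_⟩
        simp only [hfdef]
        rw [if_pos h1, hzero b h2]
      · exact hab (h1.trans h2.symm)
  exact ⟨col⟩

theorem robust_empty {V : Type*} [IsEmpty V] (G : SimpleGraph V) : robustChromNum G = 0 := by
  have hcol : (oneRemoved G (fun v => s(v, v))).Colorable 0 :=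
    ⟨Coloring.mk (fun v => isEmptyElim v) (fun {v w} _ => isEmptyElim v)⟩
  have h1 : chromNum (oneRemoved G (fun v => s(v, v))) ≤ 0 := chromNum_le hcol
  have h2 := robustChromNum_le (G := G) (f := fun v => s(v, v)) (diag_sel G)
  omega

theorem t2_lhs (n : ℕ → ℕ) (hfirst : n 0 = 1) : robustChromNum (MPG 2 n) = 1 := by
  classical
  set x : MPVert 2 n := ⟨⟨0, by omega⟩, ⟨0, show 0 < n 0 by omega⟩⟩ with hx
  have hzero : ∀ u : MPVert 2 n, (u.1 : ℕ) = 0 → u = x := by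
    intro u hu
    apply MPVert.ext' (n := n)
    · exact hu
    · show (u.2 : ℕ) = 0
      have h5 := u.2.isLt
      have h6 := congrArg n hu
      omega
  set f : MPVert 2 n → Sym2 (MPVert 2 n) := fun u =>
    if (u.1 : ℕ) = 1 then s(u, x) else s(u, u) with hfdef
  have hfsel : IsOneSelection (MPG 2 n) f := by
    intro u
    simp only [hfdef]
    split_ifs <;> exact Sym2.mem_iff.mpr (Or.inl rfl)
  have hcol : (oneRemoved (MPG 2 n) f).Colorable 1 := by
    refine ⟨Coloring.mk (fun _ => 0) ?_⟩
    intro a b hadj hcol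
    rw [oneRemoved, deleteEdges_adj] at hadj
    obtain ⟨hG, hnr⟩ := hadj
    have hab : (a.1 : ℕ) ≠ (b.1 : ℕ) := MP_adj.mp hG
    have ha := a.1.isLt
    have hb := b.1.isLt
    apply hnr
    rcases (by omega : (a.1 : ℕ) = 0 ∧ (b.1 : ℕ) = 1 ∨ (a.1 : ℕ) = 1 ∧ (b.1 : ℕ) = 0)
      with ⟨h1, h2⟩ | ⟨h1, h2⟩
    · refine ⟨b, ?_⟩
      simp only [hfdef]
      rw [if_pos h2, hzero a h1]
      exact Sym2.eq_swap
    · refine ⟨a, ?_⟩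
      simp only [hfdef]
      rw [if_pos h1, hzero b h2]
  have hub : robustChromNum (MPG 2 n) ≤ 1 :=
    le_trans (robustChromNum_le hfsel) (chromNum_le hcol)
  have hlb : 1 ≤ robustChromNum (MPG 2 n) := by
    obtain ⟨f₀, hf₀, hchrom⟩ := exists_optimal (MPG 2 n)
    by_contra hcon
    push_neg at hcon
    have h0 : robustChromNum (MPG 2 n) = 0 := by omega
    have hc0 : (oneRemoved (MPG 2 n) f₀).Colorable 0 := by
      have := colorable_chromNum (oneRemoved (MPG 2 n) f₀)
      rw [hchrom, h0] at this
      exact this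
    obtain ⟨C⟩ := hc0
    exact (C x).elim0
  omega

/-- If `1 = n 0 ≤ … ≤ n (t-1)` with `t ≥ 2` and `n (t-1) ≥ 3`, then
`χ₁(K_{n_1,…,n_t}) = 1 + χ₁(K_{n_2,…,n_{t-1}})`. -/
theorem robustChromNum_completeMultipartite_recursion_first_one
    (t : ℕ) (n : ℕ → ℕ) (ht : 2 ≤ t)
    (hfirst : n 0 = 1)
    (hpos : ∀ i, i < t → 1 ≤ n i)
    (hmono : ∀ i j, i ≤ j → j < t → n i ≤ n j)
    (hlast : 3 ≤ n (t - 1)) :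
    robustChromNum (completeMultipartiteGraph (fun i : Fin t => Fin (n i)))
      = 1 + robustChromNum (completeMultipartiteGraph
          (fun i : Fin (t - 2) => Fin (n ((i : ℕ) + 1)))) := by
  classical
  by_cases ht3 : 3 ≤ t
  · show robustChromNum (MPG t n) = 1 + robustChromNum (MPG (t-2) (fun j => n (j+1)))
    obtain ⟨f₀, hf₀, hchrom⟩ := exists_optimal (MPG t n)
    have hcolk : (oneRemoved (MPG t n) f₀).Colorable (robustChromNum (MPG t n)) := by
      rw [← hchrom]; exact colorable_chromNum _
    obtain ⟨C⟩ := hcolk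
    obtain ⟨g, hgsel, hgcol⟩ := lower_main t n ht3 hfirst hpos hmono hlast hf₀ C
    have hk1 : 1 ≤ robustChromNum (MPG t n) := by
      by_contra hcon
      push_neg at hcon
      have h0 : robustChromNum (MPG t n) = 0 := by omega
      rw [h0] at C
      exact (C ⟨⟨0, by omega⟩, ⟨0, show 0 < n 0 by omega⟩⟩).elim0
    have hH := le_trans (robustChromNum_le hgsel) (chromNum_le hgcol)
    obtain ⟨g₁, hg₁, hchrom₁⟩ := exists_optimal (MPG (t-2) (fun j => n (j+1)))
    have hcolm : (oneRemoved (MPG (t-2) (fun j => n (j+1))) g₁).Colorable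
        (robustChromNum (MPG (t-2) (fun j => n (j+1)))) := by
      rw [← hchrom₁]; exact colorable_chromNum _
    obtain ⟨D⟩ := hcolm
    obtain ⟨f₂, hf₂, hcol₂⟩ := upper_main t n ht3 hfirst hpos hg₁ D
    have hup := le_trans (robustChromNum_le hf₂) (chromNum_le hcol₂)
    omega
  · have ht2 : t = 2 := by omega
    subst ht2
    haveI hempty : IsEmpty (MPVert (2-2) (fun j => n (j+1))) := ⟨fun v => v.1.elim0⟩
    have h1 : robustChromNum (MPG (2-2) (fun j => n (j+1))) = 0 := robust_empty _
    have h2 : robustChromNum (MPG 2 n) = 1 := t2_lhs n hfirst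
    show robustChromNum (MPG 2 n) = 1 + robustChromNum (MPG (2-2) (fun j => n (j+1)))
    omega
end

section
/- Let 1 ≤ n_1 ≤ n_2 ≤ … ≤ n_t be integers with t ≥ 1 and n_1 < t, and let j be the largest integer such that n_1 + n_2 + … + n_j ≤ t − j. Then χ₁(K_{n_1,…,n_t}) ≤ t − j. -/
open SimpleGraph

section Aux
variable (t : ℕ) (n : ℕ → ℕ) (j : ℕ)

def phiAux (v : (i : Fin t) × Fin (n i)) : ℕ :=
  j + (∑ k ∈ Finset.range (v.1 : ℕ), n k) + (v.2 : ℕ)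

noncomputable def fselAux (w : (i : Fin t) × Fin (n i)) : Sym2 ((i : Fin t) × Fin (n i)) :=
  if h : ∃ v : (i : Fin t) × Fin (n i), (v.1 : ℕ) < j ∧ phiAux t n j v = (w.1 : ℕ)
  then s(w, Classical.choose h) else s(w, w)

end Aux

/-- If `1 ≤ n 0 ≤ … ≤ n (t-1)` with `t ≥ 1`, `n 0 < t`, and `j` is the
largest integer with `n 0 + … + n (j-1) ≤ t - j`, then `χ₁(K_{n_1,…,n_t}) ≤ t - j`. -/
theorem robustChromNum_completeMultipartite_upper_bound
    (t : ℕ) (n : ℕ → ℕ) (j : ℕ) (ht : 1 ≤ t)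
    (hpos : ∀ i, i < t → 1 ≤ n i)
    (hmono : ∀ i i', i ≤ i' → i' < t → n i ≤ n i')
    (hsmall : n 0 < t)
    (hj : ∑ i ∈ Finset.range j, n i ≤ t - j)
    (hjmax : ∀ j', j < j' → ¬ (∑ i ∈ Finset.range j', n i ≤ t - j')) :
    robustChromNum (completeMultipartiteGraph (fun i : Fin t => Fin (n i))) ≤ t - j := by
  classical
  set G := completeMultipartiteGraph (fun i : Fin t => Fin (n i)) with hG
  have hn0 : 1 ≤ n 0 := hpos 0 ht
  have hjt : j ≤ t := by
    by_contra h
    have h1 : n 0 ≤ ∑ i ∈ Finset.range j, n i :=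
      Finset.single_le_sum (fun i _ => Nat.zero_le _) (Finset.mem_range.mpr (by omega))
    omega
  have hsumj : ∀ i, i ≤ j → ∑ k ∈ Finset.range i, n k ≤ t - j := fun i hi =>
    le_trans (Finset.sum_le_sum_of_subset (Finset.range_subset_range.mpr hi)) hj
  have hphi_lt : ∀ v : (i : Fin t) × Fin (n i), (v.1 : ℕ) < j →
      j ≤ phiAux t n j v ∧ phiAux t n j v < t := by
    intro v hv
    have h1 : (v.2 : ℕ) < n v.1 := v.2.2
    have h2 : ∑ k ∈ Finset.range ((v.1 : ℕ) + 1), n k ≤ t - j := hsumj _ (by omega)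
    rw [Finset.sum_range_succ] at h2
    unfold phiAux
    omega
  have hinj : ∀ u v : (i : Fin t) × Fin (n i), (u.1 : ℕ) < j → (v.1 : ℕ) < j →
      phiAux t n j u = phiAux t n j v → u = v := by
    have key : ∀ u v : (i : Fin t) × Fin (n i), (u.1 : ℕ) < (v.1 : ℕ) → (v.1 : ℕ) ≤ j →
        phiAux t n j u < phiAux t n j v := by
      intro u v huv hvj
      have h1 : (u.2 : ℕ) < n u.1 := u.2.2
      have h2 : ∑ k ∈ Finset.range ((u.1 : ℕ) + 1), n k ≤ ∑ k ∈ Finset.range (v.1 : ℕ), n k :=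
        Finset.sum_le_sum_of_subset (Finset.range_subset_range.mpr (by omega))
      rw [Finset.sum_range_succ] at h2
      unfold phiAux
      omega
    intro u v hu hv heq
    have hcls : (u.1 : ℕ) = (v.1 : ℕ) := by
      rcases lt_trichotomy (u.1 : ℕ) (v.1 : ℕ) with h | h | h
      · exact absurd heq (by have := key u v h (le_of_lt hv); omega)
      · exact h
      · exact absurd heq (by have := key v u h (le_of_lt hu); omega)
    obtain ⟨ui, ux⟩ := u; obtain ⟨vi, vx⟩ := v
    simp only at hcls
    have hii : ui = vi := Fin.ext hcls
    subst hii
    have hxx : ux = vx := by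
      unfold phiAux at heq; simp only at heq
      exact Fin.ext (by omega)
    rw [hxx]
  have hsel : IsOneSelection G (fselAux t n j) := by
    intro v
    unfold fselAux
    split <;> simp
  have hrem : ∀ u v : (i : Fin t) × Fin (n i), (u.1 : ℕ) < j → phiAux t n j u = (v.1 : ℕ) →
      fselAux t n j v = s(u, v) := by
    intro u v hu hphi
    have hex : ∃ w : (i : Fin t) × Fin (n i), (w.1 : ℕ) < j ∧ phiAux t n j w = (v.1 : ℕ) :=
      ⟨u, hu, hphi⟩
    have hch := Classical.choose_spec hex
    have hcu : Classical.choose hex = u := hinj _ _ hch.1 hu (by rw [hch.2, hphi])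
    unfold fselAux
    rw [dif_pos hex, hcu, Sym2.eq_swap]
  let C : ((i : Fin t) × Fin (n i)) → Fin (t - j) := fun v =>
    if h : (v.1 : ℕ) < j then ⟨phiAux t n j v - j, by have := hphi_lt v h; omega⟩
    else ⟨(v.1 : ℕ) - j, by have := v.1.2; omega⟩
  have hvalid : ∀ u v, (oneRemoved G (fselAux t n j)).Adj u v → C u ≠ C v := by
    intro u v hadj hCuv
    rw [oneRemoved] at hadj
    rw [SimpleGraph.deleteEdges_adj] at hadj
    obtain ⟨hadj1, hadj2⟩ := hadj
    have hne : (u.1 : ℕ) ≠ (v.1 : ℕ) := by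
      intro h
      exact hadj1 (Fin.ext h)
    have hCu := congrArg Fin.val hCuv
    by_cases hu : (u.1 : ℕ) < j <;> by_cases hv : (v.1 : ℕ) < j
    · simp only [C, dif_pos hu, dif_pos hv] at hCu
      have h1 := hphi_lt u hu; have h2 := hphi_lt v hv
      have : u = v := hinj u v hu hv (by omega)
      exact hne (by rw [this])
    · simp only [C, dif_pos hu, dif_neg hv] at hCu
      have h1 := hphi_lt u hu
      have hph : phiAux t n j u = (v.1 : ℕ) := by have := v.1.2; omega
      exact hadj2 ⟨v, hrem u v hu hph⟩
    · simp only [C, dif_neg hu, dif_pos hv] at hCu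
      have h1 := hphi_lt v hv
      have hph : phiAux t n j v = (u.1 : ℕ) := by have := u.1.2; omega
      exact hadj2 ⟨u, by rw [hrem v u hv hph, Sym2.eq_swap]⟩
    · simp only [C, dif_neg hu, dif_neg hv] at hCu
      have h1 := u.1.2; have h2 := v.1.2
      exact hne (by omega)
  have hcol : (oneRemoved G (fselAux t n j)).Colorable (t - j) :=
    ⟨SimpleGraph.Coloring.mk C fun {u v} h => hvalid u v h⟩
  have h1 : chromNum (oneRemoved G (fselAux t n j)) ≤ t - j := Nat.sInf_le hcol
  have h2 : robustChromNum G ≤ chromNum (oneRemoved G (fselAux t n j)) :=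
    Nat.sInf_le ⟨fselAux t n j, hsel, rfl⟩
  exact le_trans h2 h1
end

section
/- Let k ≥ 2 and n ≥ 8k² be integers, and let 𝓕 be a family of k-element subsets of {1, …, n} that is robust independent in the Kneser graph KG(n, k). If for every x ∈ {1, …, n} there exist at least two sets F, G ∈ 𝓕 with x ∉ F and x ∉ G, then |𝓕| ≤ 8k·C(n−2, k−2). -/
open SimpleGraph

namespace RKAux
open Finset

variable {n k : ℕ}

abbrev KV (n k : ℕ) := {s : Finset (Fin n) // s.card = k}

lemma count_superset (G : Finset (KV n k)) (S : Finset (Fin n)) :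
    (G.filter fun D => S ⊆ D.1).card ≤ (n - S.card).choose (k - S.card) := by
  classical
  have h := Finset.card_le_card_of_injOn (f := fun D : KV n k => D.1 \ S)
    (s := G.filter fun D => S ⊆ D.1) (t := Finset.powersetCard (k - S.card) Sᶜ) ?_ ?_
  · rwa [Finset.card_powersetCard, Finset.card_compl, Fintype.card_fin] at h
  · intro D hD
    rw [Finset.mem_coe, Finset.mem_filter] at hD
    rw [Finset.mem_coe, Finset.mem_powersetCard]
    constructor
    · intro x hx; rw [Finset.mem_compl]; exact (Finset.mem_sdiff.mp hx).2
    · rw [Finset.card_sdiff_of_subset hD.2, D.2]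
  · intro D hD E hE hDE
    simp only [Finset.coe_filter, Set.mem_setOf_eq] at hD hE
    apply Subtype.ext
    rw [← Finset.sdiff_union_of_subset hD.2, ← Finset.sdiff_union_of_subset hE.2]
    simp only at hDE
    rw [hDE]

lemma count_pair (G : Finset (KV n k)) (x y : Fin n) (hxy : x ≠ y) :
    (G.filter fun D => x ∈ D.1 ∧ y ∈ D.1).card ≤ (n - 2).choose (k - 2) := by
  classical
  have : (G.filter fun D => x ∈ D.1 ∧ y ∈ D.1) = G.filter fun D => ({x, y} : Finset (Fin n)) ⊆ D.1 := by
    apply Finset.filter_congr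
    intro D _
    simp [Finset.insert_subset_iff]
  rw [this]
  have h2 : ({x, y} : Finset (Fin n)).card = 2 := Finset.card_pair hxy
  have := count_superset G {x, y}
  rwa [h2] at this

end RKAux

namespace RKAux2
open Finset RKAux

variable {n k : ℕ}

def CoverProp (F : Finset (KV n k)) (f : KV n k → Sym2 (KV n k)) : Prop :=
  ∀ A ∈ F, ∀ B ∈ F, A ≠ B → Disjoint A.1 B.1 → f A = s(A, B) ∨ f B = s(A, B)

variable {F : Finset (KV n k)} {f : KV n k → Sym2 (KV n k)}

lemma ne_of_disjoint (hk1 : 0 < k) {A B : KV n k} (h : Disjoint A.1 B.1) : A ≠ B := by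
  intro hEq
  subst hEq
  rw [disjoint_self] at h
  have hA := A.2
  rw [h] at hA
  simp only [Finset.bot_eq_empty, Finset.card_empty] at hA
  omega

lemma sigma_disjoint_card_le (hk1 : 0 < k) (hf : CoverProp F f)
    (S : Finset (KV n k)) (hS : S ⊆ F) :
    (S.sigma fun A => S.filter fun B => Disjoint A.1 B.1).card ≤ 2 * S.card := by
  classical
  set T := S.sigma fun A => S.filter fun B => Disjoint A.1 B.1 with hT
  have key : ∀ P ∈ T, P.1 ∈ S ∧ P.2 ∈ S ∧ P.1 ≠ P.2 ∧ Disjoint P.1.1 P.2.1 := by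
    intro P hP
    rw [hT, Finset.mem_sigma, Finset.mem_filter] at hP
    exact ⟨hP.1, hP.2.1, ne_of_disjoint hk1 hP.2.2, hP.2.2⟩
  have key2 : ∀ P ∈ T, f P.1 = s(P.1, P.2) ∨ f P.2 = s(P.1, P.2) := by
    intro P hP
    obtain ⟨h1, h2, h3, h4⟩ := key P hP
    exact hf P.1 (hS h1) P.2 (hS h2) h3 h4
  have hinj := Finset.card_le_card_of_injOn
    (f := fun P : (_ : KV n k) × KV n k => if f P.1 = s(P.1, P.2) then (P.1, true) else (P.2, false))
    (s := T) (t := S ×ˢ (Finset.univ : Finset Bool)) ?_ ?_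
  · rw [Finset.card_product] at hinj
    simpa [mul_comm] using hinj
  · intro P hP
    obtain ⟨h1, h2, _, _⟩ := key P hP
    by_cases hc : f P.1 = s(P.1, P.2) <;> simp [hc, h1, h2]
  · intro P hP Q hQ hg
    simp only [Finset.mem_coe] at hP hQ
    obtain ⟨hP1, hP2, hPne, hPd⟩ := key P hP
    obtain ⟨hQ1, hQ2, hQne, hQd⟩ := key Q hQ
    rcases P with ⟨a, b⟩
    rcases Q with ⟨a', b'⟩
    simp only at hg hPne hPd hQne hQd ⊢
    by_cases h1 : f a = s(a, b) <;> by_cases h2 : f a' = s(a', b') <;>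
      simp only [h1, h2, if_pos, if_neg, if_true, if_false] at hg
    · -- both true : (a,true)=(a',true)
      have ha : a = a' := (Prod.mk.injEq _ _ _ _ ▸ hg).1
      subst ha
      have : s(a, b) = s(a, b') := by rw [← h1, h2]
      have hb : b = b' := Sym2.congr_right.mp this
      subst hb; rfl
    · exact absurd ((Prod.mk.injEq _ _ _ _ ▸ hg).2) (by simp)
    · exact absurd ((Prod.mk.injEq _ _ _ _ ▸ hg).2) (by simp)
    · -- both false
      have hb : b = b' := (Prod.mk.injEq _ _ _ _ ▸ hg).1
      subst hb
      have hfb : f b = s(a, b) := (key2 _ hP).resolve_left h1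
      have hfb' : f b = s(a', b) := (key2 _ hQ).resolve_left h2
      have : s(a, b) = s(a', b) := by rw [← hfb, hfb']
      have ha : a = a' := Sym2.congr_left.mp this
      subst ha; rfl

lemma exists_lowdeg (hk1 : 0 < k) (hf : CoverProp F f) (S : Finset (KV n k)) (hS : S ⊆ F)
    (hne : S.Nonempty) : ∃ A ∈ S, (S.filter fun B => Disjoint A.1 B.1).card ≤ 2 := by
  classical
  by_contra h
  push_neg at h
  have h3 : 3 * S.card ≤ (S.sigma fun A => S.filter fun B => Disjoint A.1 B.1).card := by
    rw [Finset.card_sigma]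
    calc 3 * S.card = ∑ _A ∈ S, 3 := by rw [Finset.sum_const, smul_eq_mul, mul_comm]
    _ ≤ _ := Finset.sum_le_sum fun A hA => h A hA
  have h2 := sigma_disjoint_card_le hk1 hf S hS
  have hpos : 0 < S.card := Finset.card_pos.mpr hne
  omega

end RKAux2

namespace RKAux3
open Finset RKAux RKAux2

variable {n k : ℕ} {F : Finset (KV n k)} {f : KV n k → Sym2 (KV n k)}

lemma exists_intersecting_aux (hk1 : 0 < k) (hf : CoverProp F f) :
    ∀ (m : ℕ) (S : Finset (KV n k)), S ⊆ F → S.card ≤ m →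
      ∃ G : Finset (KV n k), G ⊆ S ∧
        (∀ A ∈ G, ∀ B ∈ G, A ≠ B → ¬ Disjoint A.1 B.1) ∧ S.card ≤ 3 * G.card := by
  classical
  intro m
  induction m with
  | zero =>
    intro S _ hcard
    exact ⟨∅, Finset.empty_subset _, by simp, by omega⟩
  | succ m ih =>
    intro S hSF hcard
    rcases S.eq_empty_or_nonempty with hS | hS
    · exact ⟨∅, by simp [hS], by simp, by simp [hS]⟩
    obtain ⟨A, hAS, hAdeg⟩ := exists_lowdeg hk1 hf S hSF hS
    set Bad := insert A (S.filter fun B => Disjoint A.1 B.1) with hBad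
    have hBadcard : Bad.card ≤ 3 := by
      calc Bad.card ≤ (S.filter fun B => Disjoint A.1 B.1).card + 1 := Finset.card_insert_le _ _
      _ ≤ 3 := by omega
    set S' := S \ Bad with hS'
    have hS'sub : S' ⊆ S := Finset.sdiff_subset
    have hAnotS' : A ∉ S' := by
      intro h
      rw [hS', Finset.mem_sdiff] at h
      exact h.2 (Finset.mem_insert_self _ _)
    have hS'card : S'.card ≤ m := by
      have h1 : S' ⊆ S.erase A := by
        intro x hx
        rw [hS', Finset.mem_sdiff] at hx
        rw [Finset.mem_erase]
        exact ⟨fun hxa => hx.2 (hxa ▸ Finset.mem_insert_self _ _), hx.1⟩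
      have h2 := Finset.card_le_card h1
      rw [Finset.card_erase_of_mem hAS] at h2
      omega
    obtain ⟨G', hG'sub, hG'int, hG'card⟩ := ih S' (hS'sub.trans hSF) hS'card
    refine ⟨insert A G', ?_, ?_, ?_⟩
    · intro x hx
      rcases Finset.mem_insert.mp hx with h | h
      · exact h ▸ hAS
      · exact hS'sub (hG'sub h)
    · intro X hX Y hY hXY
      have notbad : ∀ Z ∈ G', ¬ Disjoint A.1 Z.1 := by
        intro Z hZ hdisj
        have hZS' := hG'sub hZ
        rw [hS', Finset.mem_sdiff] at hZS'
        exact hZS'.2 (Finset.mem_insert_of_mem (Finset.mem_filter.mpr ⟨hZS'.1, hdisj⟩))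
      rcases Finset.mem_insert.mp hX with hX' | hX' <;> rcases Finset.mem_insert.mp hY with hY' | hY'
      · exact absurd (hX'.trans hY'.symm) hXY
      · subst hX'; exact notbad Y hY'
      · subst hY'
        intro hdisj
        exact notbad X hX' hdisj.symm
      · exact hG'int X hX' Y hY' hXY
    · have hsub2 : S ⊆ S' ∪ Bad := by
        intro x hx
        rw [Finset.mem_union, hS', Finset.mem_sdiff]
        by_cases hb : x ∈ Bad
        · exact Or.inr hb
        · exact Or.inl ⟨hx, hb⟩
      have := (Finset.card_le_card hsub2).trans (Finset.card_union_le _ _)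
      have hAG' : A ∉ G' := fun h => hAnotS' (hG'sub h)
      rw [Finset.card_insert_of_notMem hAG']
      omega

end RKAux3

namespace RKAux4
open Finset RKAux

variable {n k : ℕ}

lemma numeric_step (hk : 2 ≤ k) (hn : 8 * k ^ 2 ≤ n) (c : ℕ) (hc2 : 2 ≤ c) (hck : c + 1 ≤ k) :
    (c+1) * (k ^ c * (n - (c+1)).choose (k - (c+1))) ≤ c * (k ^ (c-1) * (n - c).choose (k - c)) := by
  set r := k - c with hr
  set m := n - c with hm
  have hr1 : 1 ≤ r := by omega
  have hkk : k ≤ n := by nlinarith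
  have hm1 : 1 ≤ m := by omega
  have hrc : k - (c+1) = r - 1 := by omega
  have hmc : n - (c+1) = m - 1 := by omega
  rw [hrc, hmc]
  have hid : m * ((m-1).choose (r-1)) = m.choose r * r := by
    have h := Nat.add_one_mul_choose_eq (m-1) (r-1)
    have e1 : m - 1 + 1 = m := by omega
    have e2 : r - 1 + 1 = r := by omega
    rw [e1, e2] at h
    exact h
  have hkc : k ^ c = k ^ (c-1) * k := by
    conv_lhs => rw [show c = c - 1 + 1 by omega]
    rw [pow_succ]
  have key : (c+1) * k * r ≤ c * m := by
    have h1 : (c+1) * k * r ≤ (c+1) * (k * k) := by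
      have : r ≤ k := by omega
      calc (c+1) * k * r ≤ (c+1) * k * k := Nat.mul_le_mul_left _ this
        _ = (c+1) * (k * k) := by ring
    have h2 : (c+1) * (k * k) ≤ (2*c) * (k * k) := by
      apply Nat.mul_le_mul_right
      omega
    have h3 : 2 * (k * k) ≤ m := by
      have hck' : c ≤ k := by omega
      have hkK : k ≤ k * k := Nat.le_mul_of_pos_left k (by omega)
      have hK : k * k = k ^ 2 := (pow_two k).symm
      omega
    calc (c+1) * k * r ≤ (2*c) * (k*k) := h1.trans h2
      _ = c * (2 * (k * k)) := by ring
      _ ≤ c * m := Nat.mul_le_mul_left _ h3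
  apply Nat.le_of_mul_le_mul_right ?_ (show 0 < m by omega)
  calc (c+1) * (k ^ c * (m-1).choose (r-1)) * m
      = ((c+1) * k * k^(c-1)) * (m * ((m-1).choose (r-1))) := by rw [hkc]; ring
    _ = ((c+1) * k * k^(c-1)) * (m.choose r * r) := by rw [hid]
    _ = ((c+1) * k * r) * (k^(c-1) * m.choose r) := by ring
    _ ≤ (c * m) * (k^(c-1) * m.choose r) := Nat.mul_le_mul key (Nat.le_refl _)
    _ = c * (k ^ (c-1) * m.choose r) * m := by ring

lemma numeric (hk : 2 ≤ k) (hn : 8 * k ^ 2 ≤ n) :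
    ∀ c, 2 ≤ c → c ≤ k →
      c * (k ^ (c-1) * (n - c).choose (k - c)) ≤ 2 * k * ((n-2).choose (k-2)) := by
  intro c hc
  induction c, hc using Nat.le_induction with
  | base =>
    intro _
    apply le_of_eq
    norm_num
    ring
  | succ c hc2 ih =>
    intro hck
    have h1 := numeric_step hk hn c hc2 hck
    have h2 := ih (by omega)
    calc (c+1) * (k ^ (c+1-1) * (n - (c+1)).choose (k - (c+1)))
        = (c+1) * (k ^ c * (n - (c+1)).choose (k - (c+1))) := by rw [Nat.add_sub_cancel]
      _ ≤ c * (k ^ (c-1) * (n - c).choose (k - c)) := h1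
      _ ≤ 2 * k * ((n-2).choose (k-2)) := h2

end RKAux4

namespace RKAux5
open Finset RKAux RKAux4

variable {n k : ℕ}

lemma intersecting_no_common_bound (hk : 2 ≤ k) (hn : 8 * k ^ 2 ≤ n)
    (G : Finset (KV n k)) (hne : G.Nonempty)
    (hint : ∀ A ∈ G, ∀ B ∈ G, A ≠ B → ¬ Disjoint A.1 B.1)
    (hnostar : ¬ ∃ x : Fin n, ∀ D ∈ G, x ∈ D.1) :
    G.card ≤ 2 * k * ((n-2).choose (k-2)) := by
  classical
  set C := (Finset.univ : Finset (Fin n)).powerset.filter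
      (fun T => ∀ D ∈ G, ∃ x ∈ T, x ∈ D.1) with hC
  obtain ⟨D₁, hD₁⟩ := hne
  have hD₁cov : D₁.1 ∈ C := by
    rw [hC, Finset.mem_filter]
    refine ⟨Finset.mem_powerset.mpr (Finset.subset_univ _), ?_⟩
    intro D hD
    by_cases hDD : D = D₁
    · subst hDD
      obtain ⟨x, hx⟩ := Finset.card_pos.mp (show 0 < D.1.card by rw [D.2]; omega)
      exact ⟨x, hx, hx⟩
    · obtain ⟨x, hx1, hx2⟩ := Finset.not_disjoint_iff.mp (hint D hD D₁ hD₁ hDD)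
      exact ⟨x, hx2, hx1⟩
  obtain ⟨T₀, hT₀mem, hT₀min⟩ := Finset.exists_min_image C Finset.card ⟨D₁.1, hD₁cov⟩
  have hT₀cov : ∀ D ∈ G, ∃ x ∈ T₀, x ∈ D.1 := (Finset.mem_filter.mp hT₀mem).2
  set c := T₀.card with hc
  have hck : c ≤ k := by
    have h := hT₀min D₁.1 hD₁cov
    rw [D₁.2] at h
    exact h
  have hc2 : 2 ≤ c := by
    by_contra h
    push_neg at h
    interval_cases c
    · have hT₀ : T₀ = ∅ := Finset.card_eq_zero.mp hc.symm
      obtain ⟨x, hx, _⟩ := hT₀cov D₁ hD₁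
      rw [hT₀] at hx
      exact absurd hx (Finset.notMem_empty x)
    · obtain ⟨x, hx⟩ := Finset.card_eq_one.mp hc.symm
      apply hnostar
      refine ⟨x, fun D hD => ?_⟩
      obtain ⟨y, hy1, hy2⟩ := hT₀cov D hD
      rw [hx, Finset.mem_singleton] at hy1
      exact hy1 ▸ hy2
  have chain : ∀ d : ℕ, ∀ S : Finset (Fin n), S.Nonempty → S.card + d = c →
      (G.filter fun D => S ⊆ D.1).card ≤ k ^ d * ((n - c).choose (k - c)) := by
    intro d
    induction d with
    | zero =>
      intro S _ hScard
      have h := count_superset G S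
      rw [show S.card = c by omega] at h
      simpa using h
    | succ d ih =>
      intro S hSne hScard
      have hSnotcov : ¬ (∀ D ∈ G, ∃ x ∈ S, x ∈ D.1) := by
        intro hcov
        have hmem : S ∈ C := by
          rw [hC, Finset.mem_filter]
          exact ⟨Finset.mem_powerset.mpr (Finset.subset_univ _), hcov⟩
        have := hT₀min S hmem
        omega
      push_neg at hSnotcov
      obtain ⟨D₀, hD₀G, hD₀dis⟩ := hSnotcov
      have hsub : (G.filter fun D => S ⊆ D.1) ⊆
          D₀.1.biUnion (fun h => G.filter fun D => insert h S ⊆ D.1) := by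
        intro D hD
        rw [Finset.mem_filter] at hD
        have hDne : D ≠ D₀ := by
          intro hEq
          obtain ⟨x, hxS⟩ := hSne
          exact hD₀dis x hxS (hEq ▸ hD.2 hxS)
        obtain ⟨x, hx1, hx2⟩ := Finset.not_disjoint_iff.mp (hint D hD.1 D₀ hD₀G hDne)
        rw [Finset.mem_biUnion]
        exact ⟨x, hx2, Finset.mem_filter.mpr ⟨hD.1, Finset.insert_subset hx1 hD.2⟩⟩
      have hbound := (Finset.card_le_card hsub).trans Finset.card_biUnion_le
      have hterm : ∀ h ∈ D₀.1, (G.filter fun D => insert h S ⊆ D.1).card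
          ≤ k ^ d * ((n - c).choose (k - c)) := by
        intro h hh
        apply ih
        · exact Finset.insert_nonempty _ _
        · rw [Finset.card_insert_of_notMem (fun hhS => hD₀dis h hhS hh)]
          omega
      calc (G.filter fun D => S ⊆ D.1).card
          ≤ ∑ h ∈ D₀.1, (G.filter fun D => insert h S ⊆ D.1).card := hbound
        _ ≤ D₀.1.card * (k ^ d * ((n - c).choose (k - c))) := by
            have := Finset.sum_le_card_nsmul D₀.1 _ _ hterm
            simpa [smul_eq_mul] using this
        _ = k ^ (d+1) * ((n - c).choose (k - c)) := by rw [D₀.2]; ring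
  have hGsub : G ⊆ T₀.biUnion (fun t => G.filter fun D => t ∈ D.1) := by
    intro D hD
    obtain ⟨x, hx1, hx2⟩ := hT₀cov D hD
    rw [Finset.mem_biUnion]
    exact ⟨x, hx1, Finset.mem_filter.mpr ⟨hD, hx2⟩⟩
  have hterm2 : ∀ t ∈ T₀, (G.filter fun D => t ∈ D.1).card
      ≤ k ^ (c-1) * ((n - c).choose (k - c)) := by
    intro t _
    have heq : (G.filter fun D => t ∈ D.1) = G.filter fun D => ({t} : Finset (Fin n)) ⊆ D.1 := by
      apply Finset.filter_congr
      intro D _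
      simp
    rw [heq]
    apply chain (c-1) {t} (Finset.singleton_nonempty t)
    rw [Finset.card_singleton]
    omega
  calc G.card ≤ (T₀.biUnion (fun t => G.filter fun D => t ∈ D.1)).card := Finset.card_le_card hGsub
    _ ≤ ∑ t ∈ T₀, (G.filter fun D => t ∈ D.1).card := Finset.card_biUnion_le
    _ ≤ T₀.card * (k ^ (c-1) * ((n - c).choose (k - c))) := by
        have := Finset.sum_le_card_nsmul T₀ _ _ hterm2
        simpa [smul_eq_mul] using this
    _ = c * (k ^ (c-1) * ((n - c).choose (k - c))) := by rw [hc]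
    _ ≤ 2 * k * ((n-2).choose (k-2)) := numeric hk hn c hc2 hck

end RKAux5

namespace RKAux6
open Finset RKAux RKAux2

variable {n k : ℕ} {F : Finset (KV n k)} {f : KV n k → Sym2 (KV n k)}

lemma degree_bound (hf : CoverProp F f) (x : Fin n)
    (A B : KV n k) (hA : A ∈ F) (hB : B ∈ F) (hAB : A ≠ B) (hxA : x ∉ A.1) (hxB : x ∉ B.1) :
    (F.filter fun D => x ∈ D.1).card ≤ 2 * k * ((n-2).choose (k-2)) + 2 := by
  classical
  set S := F.filter fun D => x ∈ D.1 with hS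
  have hsplit := Finset.card_filter_add_card_filter_not
    (s := S) (p := fun D => Disjoint D.1 A.1 ∧ Disjoint D.1 B.1)
  have hfacts : ∀ D ∈ S.filter (fun D => Disjoint D.1 A.1 ∧ Disjoint D.1 B.1),
      (f A = s(A, D) ∨ f D = s(A, D)) ∧ (f B = s(B, D) ∨ f D = s(B, D)) := by
    intro D hD
    rw [Finset.mem_filter, hS, Finset.mem_filter] at hD
    obtain ⟨⟨hDF, hxD⟩, hdA, hdB⟩ := hD
    have hDA : A ≠ D := fun h => hxA (h ▸ hxD)
    have hDB : B ≠ D := fun h => hxB (h ▸ hxD)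
    exact ⟨hf A hA D hDF hDA (Finset.disjoint_right.mpr fun y hy => Finset.disjoint_left.mp hdA hy) |>.imp id id,
           hf B hB D hDF hDB (Finset.disjoint_right.mpr fun y hy => Finset.disjoint_left.mp hdB hy)⟩
  have hEx : (S.filter fun D => Disjoint D.1 A.1 ∧ Disjoint D.1 B.1).card ≤ 2 := by
    have hinj := Finset.card_le_card_of_injOn
      (f := fun D : KV n k => if f A = s(A, D) then true else false)
      (s := S.filter fun D => Disjoint D.1 A.1 ∧ Disjoint D.1 B.1)
      (t := (Finset.univ : Finset Bool)) (fun _ _ => Finset.mem_univ _) ?_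
    · simpa using hinj
    · intro D hD E hE hg
      simp only [Finset.mem_coe] at hD hE
      simp only at hg
      obtain ⟨hDA, hDB⟩ := hfacts D hD
      obtain ⟨hEA, hEB⟩ := hfacts E hE
      by_cases h1 : f A = s(A, D) <;> by_cases h2 : f A = s(A, E)
      · exact Sym2.congr_right.mp (h1.symm.trans h2)
      · rw [if_pos h1, if_neg h2] at hg
        exact absurd hg (by simp)
      · rw [if_neg h1, if_pos h2] at hg
        exact absurd hg (by simp)
      · have hfD : f D = s(A, D) := hDA.resolve_left h1
        have hfE : f E = s(A, E) := hEA.resolve_left h2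
        have hfBD : f B = s(B, D) := by
          rcases hDB with h | h
          · exact h
          · exact absurd (Sym2.congr_left.mp ((hfD.symm.trans h))) hAB
        have hfBE : f B = s(B, E) := by
          rcases hEB with h | h
          · exact h
          · exact absurd (Sym2.congr_left.mp ((hfE.symm.trans h))) hAB
        exact Sym2.congr_right.mp (hfBD.symm.trans hfBE)
  have hRest : (S.filter fun D => ¬(Disjoint D.1 A.1 ∧ Disjoint D.1 B.1)).card
      ≤ 2 * k * ((n-2).choose (k-2)) := by
    have hsub : (S.filter fun D => ¬(Disjoint D.1 A.1 ∧ Disjoint D.1 B.1)) ⊆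
        (A.1 ∪ B.1).biUnion (fun y => F.filter fun D => x ∈ D.1 ∧ y ∈ D.1) := by
      intro D hD
      rw [Finset.mem_filter] at hD
      obtain ⟨hDS, hDnd⟩ := hD
      rw [hS, Finset.mem_filter] at hDS
      have hex : ∃ y ∈ A.1 ∪ B.1, y ∈ D.1 := by
        by_cases h1 : Disjoint D.1 A.1
        · have h2 : ¬ Disjoint D.1 B.1 := fun h => hDnd ⟨h1, h⟩
          obtain ⟨y, hy1, hy2⟩ := Finset.not_disjoint_iff.mp h2
          exact ⟨y, Finset.mem_union_right _ hy2, hy1⟩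
        · obtain ⟨y, hy1, hy2⟩ := Finset.not_disjoint_iff.mp h1
          exact ⟨y, Finset.mem_union_left _ hy2, hy1⟩
      obtain ⟨y, hy1, hy2⟩ := hex
      rw [Finset.mem_biUnion]
      exact ⟨y, hy1, Finset.mem_filter.mpr ⟨hDS.1, hDS.2, hy2⟩⟩
    have hterm : ∀ y ∈ A.1 ∪ B.1,
        (F.filter fun D => x ∈ D.1 ∧ y ∈ D.1).card ≤ (n-2).choose (k-2) := by
      intro y hy
      apply count_pair
      intro hxy
      subst hxy
      rcases Finset.mem_union.mp hy with h | h
      · exact hxA h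
      · exact hxB h
    calc (S.filter fun D => ¬(Disjoint D.1 A.1 ∧ Disjoint D.1 B.1)).card
        ≤ ((A.1 ∪ B.1).biUnion (fun y => F.filter fun D => x ∈ D.1 ∧ y ∈ D.1)).card :=
          Finset.card_le_card hsub
      _ ≤ ∑ y ∈ A.1 ∪ B.1, (F.filter fun D => x ∈ D.1 ∧ y ∈ D.1).card := Finset.card_biUnion_le
      _ ≤ (A.1 ∪ B.1).card * ((n-2).choose (k-2)) := by
          have := Finset.sum_le_card_nsmul (A.1 ∪ B.1) _ _ hterm
          simpa [smul_eq_mul] using this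
      _ ≤ (2 * k) * ((n-2).choose (k-2)) := by
          apply Nat.mul_le_mul_right
          calc (A.1 ∪ B.1).card ≤ A.1.card + B.1.card := Finset.card_union_le _ _
            _ = 2 * k := by rw [A.2, B.2]; ring
      _ = 2 * k * ((n-2).choose (k-2)) := by ring
  omega

lemma sum_deg (F : Finset (KV n k)) :
    ∑ x : Fin n, (F.filter fun D => x ∈ D.1).card = k * F.card := by
  classical
  have h1 : ∀ x : Fin n, (F.filter fun D => x ∈ D.1).card
      = ∑ D ∈ F, if x ∈ D.1 then 1 else 0 := fun x => Finset.card_filter _ _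
  calc ∑ x : Fin n, (F.filter fun D => x ∈ D.1).card
      = ∑ x : Fin n, ∑ D ∈ F, (if x ∈ D.1 then 1 else 0) := by
        apply Finset.sum_congr rfl
        intro x _
        exact h1 x
    _ = ∑ D ∈ F, ∑ x : Fin n, (if x ∈ D.1 then 1 else 0) := Finset.sum_comm
    _ = ∑ D ∈ F, k := by
        apply Finset.sum_congr rfl
        intro D _
        rw [Finset.sum_ite_mem, Finset.univ_inter, Finset.sum_const, smul_eq_mul, mul_one, D.2]
    _ = k * F.card := by rw [Finset.sum_const, smul_eq_mul, mul_comm]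

lemma cs_bound (hk1 : 0 < k) (hf : CoverProp F f) (M : ℕ)
    (hdeg : ∀ x : Fin n, (F.filter fun D => x ∈ D.1).card ≤ M) :
    F.card * F.card ≤ M * (k * F.card) + 2 * F.card := by
  classical
  have hcard : (F ×ˢ F).card = F.card * F.card := Finset.card_product _ _
  have hsplit := Finset.card_filter_add_card_filter_not
    (s := F ×ˢ F) (p := fun P => Disjoint P.1.1 P.2.1)
  have hdis : ((F ×ˢ F).filter fun P => Disjoint P.1.1 P.2.1).card ≤ 2 * F.card := by
    have hsub := Finset.card_le_card_of_injOn
      (f := fun P : KV n k × KV n k => (⟨P.1, P.2⟩ : (_ : KV n k) × KV n k))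
      (s := (F ×ˢ F).filter fun P => Disjoint P.1.1 P.2.1)
      (t := F.sigma fun A => F.filter fun B => Disjoint A.1 B.1) ?_ ?_
    · exact hsub.trans (sigma_disjoint_card_le hk1 hf F (subset_refl _))
    · intro P hP
      rw [Finset.mem_coe, Finset.mem_filter, Finset.mem_product] at hP
      rw [Finset.mem_coe, Finset.mem_sigma, Finset.mem_filter]
      exact ⟨hP.1.1, hP.1.2, hP.2⟩
    · intro P _ Q _ h
      rcases P with ⟨Pa, Pb⟩
      rcases Q with ⟨Qa, Qb⟩
      simp only at h
      injection h with h1 h2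
      subst h1
      rw [Prod.mk.injEq]
      exact ⟨rfl, h2⟩
  have hintp : ((F ×ˢ F).filter fun P => ¬ Disjoint P.1.1 P.2.1).card
      ≤ ∑ x : Fin n, ((F.filter fun D => x ∈ D.1).card * (F.filter fun D => x ∈ D.1).card) := by
    have hsub : ((F ×ˢ F).filter fun P => ¬ Disjoint P.1.1 P.2.1) ⊆
        Finset.univ.biUnion (fun x : Fin n =>
          (F.filter fun D => x ∈ D.1) ×ˢ (F.filter fun D => x ∈ D.1)) := by
      intro P hP
      rw [Finset.mem_filter, Finset.mem_product] at hP
      obtain ⟨y, hy1, hy2⟩ := Finset.not_disjoint_iff.mp hP.2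
      rw [Finset.mem_biUnion]
      refine ⟨y, Finset.mem_univ _, ?_⟩
      rw [Finset.mem_product]
      exact ⟨Finset.mem_filter.mpr ⟨hP.1.1, hy1⟩, Finset.mem_filter.mpr ⟨hP.1.2, hy2⟩⟩
    refine (Finset.card_le_card hsub).trans (Finset.card_biUnion_le.trans ?_)
    apply Finset.sum_le_sum
    intro x _
    rw [Finset.card_product]
  have hsum2 : ∑ x : Fin n, ((F.filter fun D => x ∈ D.1).card * (F.filter fun D => x ∈ D.1).card)
      ≤ M * (k * F.card) := by
    calc ∑ x : Fin n, ((F.filter fun D => x ∈ D.1).card * (F.filter fun D => x ∈ D.1).card)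
        ≤ ∑ x : Fin n, M * (F.filter fun D => x ∈ D.1).card :=
          Finset.sum_le_sum fun x _ => Nat.mul_le_mul_right _ (hdeg x)
      _ = M * ∑ x : Fin n, (F.filter fun D => x ∈ D.1).card := by rw [Finset.mul_sum]
      _ = M * (k * F.card) := by rw [sum_deg]
  have h2 := hintp.trans hsum2
  linarith

end RKAux6


/-- Let `k ≥ 2`, `n ≥ 8k²` and let `𝓕` be a robust independent family in
`KG(n,k)` such that every point of `[n]` is missed by at least two members of `𝓕`.
Then `|𝓕| ≤ 8k·C(n-2, k-2)`. -/
theorem card_le_of_robustIndep_kneser (k n : ℕ) (hk : 2 ≤ k) (hn : 8 * k ^ 2 ≤ n)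
    (F : Finset {s : Finset (Fin n) // s.card = k})
    (hind : IsRobustIndep (kneserGraph n k) ↑F)
    (hmiss : ∀ x : Fin n, ∃ A ∈ F, ∃ B ∈ F, A ≠ B ∧ x ∉ A.1 ∧ x ∉ B.1) :
    F.card ≤ 8 * k * (n - 2).choose (k - 2) := by
  classical
  obtain ⟨f, hsel, hindep⟩ := hind
  have hk1 : 0 < k := by omega
  have hf : RKAux2.CoverProp F f := by
    intro A hA B hB hAB hdisj
    have hAdj : (kneserGraph n k).Adj A B := ⟨hAB, hdisj⟩
    have hnadj := hindep (Finset.mem_coe.mpr hA) (Finset.mem_coe.mpr hB) hAB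
    rw [oneRemoved, SimpleGraph.deleteEdges_adj] at hnadj
    have hrange : s(A, B) ∈ Set.range f := by
      by_contra hr
      exact hnadj ⟨hAdj, hr⟩
    obtain ⟨W, hW⟩ := hrange
    have hWmem : W ∈ f W := hsel W
    rw [hW, Sym2.mem_iff] at hWmem
    rcases hWmem with h | h
    · exact Or.inl (h ▸ hW)
    · exact Or.inr (h ▸ hW)
  have hdeg : ∀ x : Fin n,
      (F.filter fun D => x ∈ D.1).card ≤ 2 * k * ((n - 2).choose (k - 2)) + 2 := by
    intro x
    obtain ⟨A, hA, B, hB, hAB, hxA, hxB⟩ := hmiss x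
    exact RKAux6.degree_bound hf x A B hA hB hAB hxA hxB
  rcases eq_or_lt_of_le hk with hk2 | hk3
  · -- k = 2
    subst hk2
    have hCn1 : (n - 2).choose (2 - 2) = 1 := Nat.choose_zero_right _
    have hcs := RKAux6.cs_bound hk1 hf (2 * 2 * ((n - 2).choose (2 - 2)) + 2) hdeg
    rw [hCn1] at hcs ⊢
    norm_num at hcs ⊢
    -- hcs : F.card * F.card ≤ 14 * F.card (roughly); goal : F.card ≤ 16
    by_contra hcon
    push_neg at hcon
    have h17 : 17 ≤ F.card := hcon
    have := Nat.mul_le_mul_right F.card h17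
    nlinarith
  · -- k ≥ 3
    by_contra hcon
    push_neg at hcon
    have hN : 8 * k * ((n - 2).choose (k - 2)) + 1 ≤ F.card := hcon
    obtain ⟨G, hGsub, hGint, hGcard⟩ :=
      RKAux3.exists_intersecting_aux hk1 hf F.card F (subset_refl _) (le_refl _)
    have hkn : k ≤ n := by nlinarith
    have hCpos : 1 ≤ (n - 2).choose (k - 2) := Nat.choose_pos (by omega)
    have hkC : 3 ≤ k * ((n - 2).choose (k - 2)) := by
      calc 3 ≤ k * 1 := by omega
        _ ≤ k * ((n - 2).choose (k - 2)) := Nat.mul_le_mul_left _ hCpos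
    by_cases hstar : ∃ x : Fin n, ∀ D ∈ G, x ∈ D.1
    · obtain ⟨x, hx⟩ := hstar
      have hsub : G ⊆ F.filter fun D => x ∈ D.1 :=
        fun D hD => Finset.mem_filter.mpr ⟨hGsub hD, hx D hD⟩
      have hGle := (Finset.card_le_card hsub).trans (hdeg x)
      linarith
    · have hFpos : 0 < F.card := lt_of_lt_of_le (Nat.succ_pos _) hN
      have hGne : G.Nonempty := by
        rcases G.eq_empty_or_nonempty with h | h
        · rw [h] at hGcard
          simp only [Finset.card_empty, Nat.mul_zero] at hGcard
          omega
        · exact h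
      have hbound := RKAux5.intersecting_no_common_bound hk hn G hGne hGint hstar
      linarith
end

section
/- For every finite graph G, the robust chromatic number χ₁(G) equals the minimum number k of classes in a partition V(G) = V_1 ∪ … ∪ V_k such that for each i the subgraph of G induced by V_i is quasi-unicyclic. -/
open SimpleGraph

namespace RobustAux

open SimpleGraph Walk List

variable {W : Type*}

lemma mem_support_of_mem_edges {H : SimpleGraph W} {a b x : W} {p : H.Walk a b}
    {e : Sym2 W} (he : e ∈ p.edges) (hx : x ∈ e) : x ∈ p.support := by
  induction e with
  | h y z =>
    rcases Sym2.mem_iff.mp hx with rfl | rfl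
    · exact p.fst_mem_support_of_mem_edges he
    · exact p.snd_mem_support_of_mem_edges he

/-- The end of a non-trivial walk is in its last edge. -/
lemma end_mem_getLast_edge {H : SimpleGraph W} :
    ∀ {a b : W} (w : H.Walk a b) (h : w.edges ≠ []), b ∈ w.edges.getLast h := by
  intro a b w
  induction w with
  | nil => simp
  | @cons a c b h t ih =>
    intro hne
    by_cases ht : t.edges = []
    · have hnil : t.Nil := by
        rw [Walk.nil_iff_length_eq, ← Walk.length_edges, ht]; rfl
      have hcb : c = b := hnil.eq
      subst hcb
      simp only [Walk.edges_cons, ht]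
      simp
    · have : (Walk.cons h t).edges.getLast hne = t.edges.getLast ht := by
        simp only [Walk.edges_cons]
        exact List.getLast_cons ht
      rw [this]
      exact ih ht

/-- In a path, an edge containing the final vertex is the last edge. -/
lemma path_end_edge {H : SimpleGraph W} :
    ∀ {y x : W} (r : H.Walk y x), r.IsPath → ∀ e ∈ r.edges, x ∈ e →
      ∀ (hne : r.edges ≠ []), e = r.edges.getLast hne := by
  intro y x r
  induction r with
  | nil => intro _ e he; simp at he
  | @cons y z x h t ih =>
    intro hp e he hxe hne
    rcases List.mem_cons.mp (by simpa using he) with rfl | he'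
    · -- e = s(y,z) contains x
      rcases Sym2.mem_iff.mp hxe with rfl | rfl
      · exact absurd t.end_mem_support ((Walk.cons_isPath_iff _ _).mp hp).2
      · -- x = z, so t : Walk x x path must be nil
        have htE : t.edges = [] := by
          cases t with
          | nil => rfl
          | cons h'' t' =>
            exfalso
            have := ((Walk.cons_isPath_iff _ _).mp
              ((Walk.cons_isPath_iff _ _).mp hp).1).2
            exact this t'.end_mem_support
        simp only [Walk.edges_cons, htE]
        simp
    · have htne : t.edges ≠ [] := List.ne_nil_of_mem he'
      have hlast : (Walk.cons h t).edges.getLast hne = t.edges.getLast htne := by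
        simp only [Walk.edges_cons]
        exact List.getLast_cons htne
      rw [hlast]
      exact ih ((Walk.cons_isPath_iff _ _).mp hp).1 e he' hxe htne

/-- In a cycle, the base vertex lies on exactly two (distinct) edges. -/
lemma cycle_edges_at_base {H : SimpleGraph W} {x : W} {q : H.Walk x x} (hq : q.IsCycle) :
    ∃ e1 e2, e1 ∈ q.edges ∧ e2 ∈ q.edges ∧ e1 ≠ e2 ∧ x ∈ e1 ∧ x ∈ e2 ∧
      ∀ e ∈ q.edges, x ∈ e → e = e1 ∨ e = e2 := by
  cases q with
  | nil => exact absurd hq.not_nil (by simp)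
  | @cons _ y _ h r =>
    obtain ⟨hrpath, hxy⟩ := (Walk.cons_isCycle_iff r h).mp hq
    have hrne : r.edges ≠ [] := by
      intro h0
      have : r.Nil := by rw [Walk.nil_iff_length_eq, ← Walk.length_edges, h0]; rfl
      exact h.ne this.eq.symm
    refine ⟨s(x, y), r.edges.getLast hrne, by simp, ?_, ?_, by simp, ?_, ?_⟩
    · simp only [Walk.edges_cons]
      exact List.mem_cons_of_mem _ (List.getLast_mem hrne)
    · intro heq
      have : s(x, y) ∈ r.edges := heq ▸ List.getLast_mem hrne
      exact hxy this
    · exact end_mem_getLast_edge r hrne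
    · intro e he hxe
      rcases List.mem_cons.mp (by simpa using he) with rfl | he'
      · exact Or.inl rfl
      · exact Or.inr (path_end_edge r hrpath e he' hxe hrne)

/-- Any vertex on a cycle lies on exactly two (distinct) edges of the cycle. -/
lemma cycle_edges_at [DecidableEq W] {H : SimpleGraph W} {u : W} {q : H.Walk u u}
    (hq : q.IsCycle) {x : W} (hx : x ∈ q.support) :
    ∃ e1 e2, e1 ∈ q.edges ∧ e2 ∈ q.edges ∧ e1 ≠ e2 ∧ x ∈ e1 ∧ x ∈ e2 ∧
      ∀ e ∈ q.edges, x ∈ e → e = e1 ∨ e = e2 := by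
  have hq' := hq.rotate hx
  have hmem : ∀ e : Sym2 W, e ∈ (q.rotate x hx).edges ↔ e ∈ q.edges := fun e =>
    (q.rotate_edges x hx).perm.mem_iff
  obtain ⟨e1, e2, h1, h2, hne, hx1, hx2, hall⟩ := cycle_edges_at_base hq'
  exact ⟨e1, e2, (hmem e1).mp h1, (hmem e2).mp h2, hne, hx1, hx2,
    fun e he hxe => hall e ((hmem e).mpr he) hxe⟩

section LemA

variable [DecidableEq W] {H : SimpleGraph W} {f : W → Sym2 W}

/-- The "other endpoint" map of a selection. -/
noncomputable def gsel (f : W → Sym2 W) (hsel : ∀ v, v ∈ f v) : W → W :=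
  fun v => Sym2.Mem.other (hsel v)

lemma gsel_spec (hsel : ∀ v, v ∈ f v) (v : W) : s(v, gsel f hsel v) = f v :=
  Sym2.other_spec (hsel v)

lemma gsel_eq (hsel : ∀ v, v ∈ f v) {x y : W} (h : f x = s(x, y)) (hne : x ≠ y) :
    gsel f hsel x = y := by
  have := (gsel_spec hsel x).trans h
  exact Sym2.congr_right.mp this

/-- The set of periodic points of `g` in the forward orbit of `x`. -/
def OSet (g : W → W) (x : W) : Set W :=
  {w | (∃ n, 0 < n ∧ g^[n] w = w) ∧ ∃ m, g^[m] x = w}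

lemma OSet_g (g : W → W) (x : W) : OSet g (g x) = OSet g x := by
  ext w
  simp only [OSet, Set.mem_setOf_eq]
  constructor
  · rintro ⟨hp, m, hm⟩
    exact ⟨hp, m + 1, by rwa [Function.iterate_succ_apply]⟩
  · rintro ⟨⟨n, hn, hper⟩, m, hm⟩
    refine ⟨⟨n, hn, hper⟩, n + m - 1, ?_⟩
    have h1 : n + m - 1 + 1 = n + m := by omega
    calc g^[n + m - 1] (g x) = g^[n + m - 1 + 1] x := (Function.iterate_succ_apply g _ x).symm
      _ = g^[n + m] x := by rw [h1]
      _ = g^[n] (g^[m] x) := Function.iterate_add_apply g n m x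
      _ = w := by rw [hm, hper]

lemma OSet_eq_of_adj (hsel : ∀ v, v ∈ f v) (hcov : ∀ e ∈ H.edgeSet, ∃ v, f v = e)
    {x y : W} (hxy : H.Adj x y) : OSet (gsel f hsel) x = OSet (gsel f hsel) y := by
  obtain ⟨v, hv⟩ := hcov s(x, y) (H.mem_edgeSet.mpr hxy)
  have hvm : v = x ∨ v = y := by
    have := hsel v; rw [hv] at this; exact Sym2.mem_iff.mp this
  rcases hvm with rfl | rfl
  · have : gsel f hsel v = y := gsel_eq hsel hv hxy.ne
    rw [← this, OSet_g]
  · have : gsel f hsel v = x := gsel_eq hsel (by rwa [Sym2.eq_swap]) hxy.ne'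
    rw [← this, OSet_g]

lemma OSet_eq_of_reachable (hsel : ∀ v, v ∈ f v) (hcov : ∀ e ∈ H.edgeSet, ∃ v, f v = e)
    {x y : W} (h : H.Reachable x y) : OSet (gsel f hsel) x = OSet (gsel f hsel) y := by
  obtain ⟨p⟩ := h
  induction p with
  | nil => rfl
  | cons hadj p ih => exact (OSet_eq_of_adj hsel hcov hadj).trans ih

variable [Fintype W]

lemma cycle_key (hsel : ∀ v, v ∈ f v) (hcov : ∀ e ∈ H.edgeSet, ∃ v, f v = e)
    {u : W} {p : H.Walk u u} (hp : p.IsCycle) :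
    p.edges.toFinset = p.support.toFinset.image f ∧
      (↑p.support.toFinset : Set W) = OSet (gsel f hsel) u := by
  set g := gsel f hsel with hg
  set S := p.support.toFinset with hS
  set E := p.edges.toFinset with hE
  have hcardE : E.card = p.length := by
    rw [hE, List.toFinset_card_of_nodup hp.isTrail.edges_nodup, Walk.length_edges]
  have hu_tail : u ∈ p.support.tail := by
    cases p with
    | nil => exact absurd hp.not_nil (by simp)
    | cons h r => simpa using r.end_mem_support
  have hS_tail : S = p.support.tail.toFinset := by
    rw [hS]
    conv_lhs => rw [p.support_eq_cons]
    simp only [List.toFinset_cons]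
    exact Finset.insert_eq_self.mpr (List.mem_toFinset.mpr hu_tail)
  have hcardS : S.card = p.length := by
    rw [hS_tail, List.toFinset_card_of_nodup hp.support_nodup, List.length_tail,
      Walk.length_support]
    omega
  have hES : E ⊆ S.image f := by
    intro e he
    rw [hE, List.mem_toFinset] at he
    obtain ⟨v, hv⟩ := hcov e (p.edges_subset_edgeSet he)
    have hve : v ∈ e := hv ▸ hsel v
    have hvS : v ∈ S := List.mem_toFinset.mpr (mem_support_of_mem_edges he hve)
    exact Finset.mem_image.mpr ⟨v, hvS, hv⟩
  have himage : S.image f = E := by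
    refine (Finset.eq_of_subset_of_card_le hES ?_).symm
    rw [hcardE, ← hcardS]
    exact Finset.card_image_le
  have hfS : ∀ v ∈ S, f v ∈ E := fun v hv => himage ▸ Finset.mem_image_of_mem f hv
  have hgS : ∀ v ∈ S, g v ∈ S := by
    intro v hv
    have h1 : f v ∈ p.edges := List.mem_toFinset.mp (hfS v hv)
    have h2 : g v ∈ f v := by rw [← gsel_spec hsel v]; simp [hg]
    exact List.mem_toFinset.mpr (mem_support_of_mem_edges h1 h2)
  have hsurj : ∀ x ∈ S, ∃ v ∈ S, g v = x := by
    intro x hx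
    obtain ⟨e1, e2, h1, h2, hne, hx1, hx2, -⟩ :=
      cycle_edges_at hp (List.mem_toFinset.mp hx)
    obtain ⟨v1, hv1S, hv1⟩ := Finset.mem_image.mp
      (by rw [himage]; exact List.mem_toFinset.mpr h1)
    obtain ⟨v2, hv2S, hv2⟩ := Finset.mem_image.mp
      (by rw [himage]; exact List.mem_toFinset.mpr h2)
    have hv12 : v1 ≠ v2 := by rintro rfl; exact hne (hv1.symm.trans hv2)
    have hm1 : x = v1 ∨ x = gsel f hsel v1 := by
      have : x ∈ s(v1, gsel f hsel v1) := by rw [gsel_spec hsel, hv1]; exact hx1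
      exact Sym2.mem_iff.mp this
    have hm2 : x = v2 ∨ x = gsel f hsel v2 := by
      have : x ∈ s(v2, gsel f hsel v2) := by rw [gsel_spec hsel, hv2]; exact hx2
      exact Sym2.mem_iff.mp this
    rcases hm1 with rfl | h1'
    · rcases hm2 with rfl | h2'
      · exact absurd rfl hv12
      · exact ⟨v2, hv2S, h2'.symm⟩
    · exact ⟨v1, hv1S, h1'.symm⟩
  have hginj : Set.InjOn g ↑S := by
    have himg_sub : S.image g ⊆ S := Finset.image_subset_iff.mpr hgS
    have hsub : S ⊆ S.image g := by
      intro x hx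
      obtain ⟨v, hv, hgv⟩ := hsurj x hx
      exact Finset.mem_image.mpr ⟨v, hv, hgv⟩
    have heq : S.image g = S := Finset.Subset.antisymm himg_sub hsub
    exact Finset.card_image_iff.mp (by rw [heq])
  have hinv : ∀ v ∈ S, ∀ m, g^[m] v ∈ S := by
    intro v hv m
    induction m with
    | zero => exact hv
    | succ m ih => rw [Function.iterate_succ_apply']; exact hgS _ ih
  have cancel : ∀ (i : ℕ) (x y : W), (∀ m, g^[m] x ∈ S) → (∀ m, g^[m] y ∈ S) →
      g^[i] x = g^[i] y → x = y := by
    intro i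
    induction i with
    | zero => intro x y _ _ h; simpa using h
    | succ i ih =>
      intro x y hmx hmy h
      have h' : g^[i] (g x) = g^[i] (g y) := by
        rwa [← Function.iterate_succ_apply, ← Function.iterate_succ_apply]
      have hgxy : g x = g y :=
        ih (g x) (g y) (fun m => by
            rw [← Function.iterate_succ_apply]; exact hmx (m + 1))
          (fun m => by rw [← Function.iterate_succ_apply]; exact hmy (m + 1)) h'
      exact hginj (by simpa using hmx 0) (by simpa using hmy 0) hgxy
  have hper : ∀ v ∈ S, ∃ n, 0 < n ∧ g^[n] v = v := by
    intro v hv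
    obtain ⟨i, j, hij, hequ⟩ :
        ∃ i j : ℕ, i ≠ j ∧ g^[i] v = g^[j] v := by
      obtain ⟨i, j, hij, h⟩ :=
        Finite.exists_ne_map_eq_of_infinite (fun n : ℕ => g^[n] v)
      exact ⟨i, j, hij, h⟩
    wlog hlt : i < j generalizing i j
    · exact this j i hij.symm hequ.symm (by omega)
    have hd : j = i + (j - i) := by omega
    have : g^[i] v = g^[i] (g^[j - i] v) := by
      rw [← Function.iterate_add_apply, ← hd]
      exact hequ
    have hveq : v = g^[j - i] v :=
      cancel i v (g^[j - i] v) (hinv v hv)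
        (fun m => by rw [← Function.iterate_add_apply]; exact hinv v hv _) this
    exact ⟨j - i, by omega, hveq.symm⟩
  refine ⟨himage.symm, ?_⟩
  apply Set.Subset.antisymm
  · intro v hv
    have hvS : v ∈ S := by exact_mod_cast hv
    have hreach : H.Reachable u v :=
      ⟨p.takeUntil v (List.mem_toFinset.mp hvS)⟩
    rw [OSet_eq_of_reachable hsel hcov hreach]
    exact ⟨hper v hvS, 0, rfl⟩
  · rintro w ⟨-, m, hm⟩
    have huS : u ∈ S := List.mem_toFinset.mpr p.start_mem_support
    have := hinv u huS m
    rw [hm] at this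
    exact_mod_cast this

/-- KEY LEMMA A: if every edge of `H` is selected by one of its endpoints,
then `H` is quasi-unicyclic. -/
theorem quasiUnicyclic_of_selection {H : SimpleGraph W} {f : W → Sym2 W}
    (hsel : ∀ v, v ∈ f v) (hcov : ∀ e ∈ H.edgeSet, ∃ v, f v = e) :
    QuasiUnicyclic H := by
  intro u v p q hp hq hr
  obtain ⟨hpE, hpS⟩ := cycle_key hsel hcov hp
  obtain ⟨hqE, hqS⟩ := cycle_key hsel hcov hq
  have hO : OSet (gsel f hsel) u = OSet (gsel f hsel) v :=
    OSet_eq_of_reachable hsel hcov hr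
  have hsupp : p.support.toFinset = q.support.toFinset := by
    apply Finset.coe_injective
    rw [hpS, hqS, hO]
  rw [hpE, hqE, hsupp]

end LemA

section LemB

variable [DecidableEq W]

lemma mapLe_cons {H H' : SimpleGraph W} (hle : H ≤ H') {a c b : W} (h : H.Adj a c)
    (t : H.Walk c b) :
    (Walk.cons h t).mapLe hle = Walk.cons (hle h) (t.mapLe hle) := rfl

lemma edges_mapLe {H H' : SimpleGraph W} (hle : H ≤ H') {a b : W} (p : H.Walk a b) :
    (p.mapLe hle).edges = p.edges := by
  induction p with
  | nil => rfl
  | cons h t ih => rw [mapLe_cons, Walk.edges_cons, Walk.edges_cons, ih]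

lemma QU_mono {H' H : SimpleGraph W} (hle : H' ≤ H) (h : QuasiUnicyclic H) :
    QuasiUnicyclic H' := by
  intro u v p q hp hq hr
  have h2 := h u v (p.mapLe hle) (q.mapLe hle) (hp.mapLe hle) (hq.mapLe hle) (hr.mono hle)
  rwa [edges_mapLe, edges_mapLe] at h2

lemma QU_of_subsingleton (hss : Subsingleton W) (H : SimpleGraph W) : QuasiUnicyclic H := by
  intro u v p q hp _ _
  exfalso
  cases p with
  | nil => simpa using hp.three_le_length
  | cons h t => exact h.ne (Subsingleton.elim _ _)

/-- First place where a path hits a set `T`, given that its end lies in `T`. -/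
lemma first_hit {H : SimpleGraph W} {T : Set W} :
    ∀ {a b : W} (P : H.Walk a b), P.IsPath → b ∈ T →
      ∃ (t : W), t ∈ T ∧ ∃ (W1 : H.Walk a t), W1.IsPath ∧
        (∀ w ∈ W1.support, w ∈ P.support) ∧ (∀ e ∈ W1.edges, e ∈ P.edges) ∧
        ∀ w ∈ W1.support.dropLast, w ∉ T := by
  intro a b P
  induction P with
  | nil =>
    intro _ hb
    refine ⟨_, hb, Walk.nil, ?_, ?_, ?_, ?_⟩ <;> simp [Walk.IsPath.nil]
  | @cons a c b h P ih =>
    intro hp hb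
    by_cases ha : a ∈ T
    · exact ⟨a, ha, Walk.nil, by simp [Walk.IsPath.nil], by simp, by simp, by simp⟩
    · obtain ⟨t, ht, W1, hW1p, hW1s, hW1e, hW1d⟩ := ih hp.of_cons hb
      refine ⟨t, ht, Walk.cons h W1, ?_, ?_, ?_, ?_⟩
      · rw [Walk.cons_isPath_iff]
        exact ⟨hW1p, fun hc => ((Walk.cons_isPath_iff _ _).mp hp).2 (hW1s a hc)⟩
      · intro w hw
        rcases List.mem_cons.mp (by simpa using hw) with rfl | hw'
        · simp
        · simp only [Walk.support_cons]
          exact List.mem_cons_of_mem _ (hW1s w hw')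
      · intro e he
        rcases List.mem_cons.mp (by simpa using he) with rfl | he'
        · simp
        · simp only [Walk.edges_cons]
          exact List.mem_cons_of_mem _ (hW1e e he')
      · intro w hw
        have hne : W1.support ≠ [] := W1.support_ne_nil
        rw [Walk.support_cons] at hw
        rw [List.dropLast_cons_of_ne_nil hne] at hw
        rcases List.mem_cons.mp hw with rfl | hw'
        · exact ha
        · exact hW1d w hw'

/-- At the end of a maximal path (with at least one edge, in a graph with no
degree-one vertices) there is a cycle through the endpoint, inside the path. -/
lemma end_cycle {H : SimpleGraph W} (hdeg : ∀ v, (H.neighborSet v).ncard ≠ 1)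
    {a b : W} {P : H.Walk a b} (hP : P.IsPath) (hlen : 0 < P.length)
    (hmax : ∀ x, H.Adj b x → x ∈ P.support) :
    ∃ (x0 : W) (c : H.Walk x0 x0), c.IsCycle ∧ b ∈ c.support ∧
      ∀ w ∈ c.support, w ∈ P.support := by
  have hnil : ¬ P.reverse.Nil := by
    rw [Walk.nil_iff_length_eq, Walk.length_reverse]; omega
  obtain ⟨y, h, R, hPrev⟩ := Walk.not_nil_iff.mp hnil
  have hconsPath : (Walk.cons h R).IsPath := hPrev ▸ hP.reverse
  have hRpath : R.IsPath := ((Walk.cons_isPath_iff _ _).mp hconsPath).1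
  have hbR : b ∉ R.support := ((Walk.cons_isPath_iff _ _).mp hconsPath).2
  have hyN : y ∈ H.neighborSet b := h
  have hns : ¬ (H.neighborSet b ⊆ {y}) := by
    intro hsub
    have heq : H.neighborSet b = {y} :=
      Set.Subset.antisymm hsub (by simpa using hyN)
    exact hdeg b (by rw [heq, Set.ncard_singleton])
  obtain ⟨x, hxN, hxy⟩ := Set.not_subset.mp hns
  simp only [Set.mem_singleton_iff] at hxy
  have hbx : H.Adj b x := hxN
  have hxb : x ≠ b := hbx.ne'
  have hxP : x ∈ P.support := hmax x hbx
  have hxR : x ∈ R.support := by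
    have hx' : x ∈ P.reverse.support := by
      rw [Walk.support_reverse]; simpa using hxP
    rw [hPrev, Walk.support_cons] at hx'
    rcases List.mem_cons.mp hx' with rfl | hxR
    · exact absurd rfl hxb
    · exact hxR
  have hc0path : (Walk.cons h (R.takeUntil x hxR)).IsPath := by
    rw [Walk.cons_isPath_iff]
    exact ⟨hRpath.takeUntil hxR,
      fun hbmem => hbR (R.support_takeUntil_subset hxR hbmem)⟩
  refine ⟨x, Walk.cons hbx.symm (Walk.cons h (R.takeUntil x hxR)), ?_, ?_, ?_⟩
  · rw [Walk.cons_isCycle_iff]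
    refine ⟨hc0path, ?_⟩
    intro hmem
    rw [Walk.edges_cons] at hmem
    rcases List.mem_cons.mp hmem with heq | hmem'
    · rcases Sym2.eq_iff.mp heq with ⟨h1, -⟩ | ⟨h1, -⟩
      · exact hxb h1
      · exact hxy h1
    · have hb' : b ∈ (R.takeUntil x hxR).support :=
        mem_support_of_mem_edges hmem' (by simp)
      exact hbR (R.support_takeUntil_subset hxR hb')
  · simp
  · intro w hw
    rw [Walk.support_cons] at hw
    rcases List.mem_cons.mp hw with rfl | hw'
    · exact hxP
    · rw [Walk.support_cons] at hw'
      rcases List.mem_cons.mp hw' with rfl | hw''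
      · exact P.end_mem_support
      · have h1 : w ∈ R.support := R.support_takeUntil_subset hxR hw''
        have h2 : w ∈ P.reverse.support := by
          rw [hPrev, Walk.support_cons]
          exact List.mem_cons_of_mem _ h1
        rw [Walk.support_reverse] at h2
        simpa using h2

end LemB

section LemB2

variable [DecidableEq W] [Fintype W]

/-- In a quasi-unicyclic graph with no degree-one vertices, every edge incident to a
vertex of a cycle belongs to that cycle. -/
lemma cycle_edge_closed {H : SimpleGraph W} (hQU : QuasiUnicyclic H)
    (hdeg : ∀ v, (H.neighborSet v).ncard ≠ 1)
    {u : W} {q : H.Walk u u} (hq : q.IsCycle) :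
    ∀ x ∈ q.support, ∀ e3 ∈ H.edgeSet, x ∈ e3 → e3 ∈ q.edges := by
  intro x hxq e3 he3 hxe3
  by_contra he3q
  set z := Sym2.Mem.other hxe3 with hz
  have hsz : s(x, z) = e3 := Sym2.other_spec hxe3
  have hadj3 : H.Adj x z := by rw [← SimpleGraph.mem_edgeSet, hsz]; exact he3
  set q' := q.rotate x hxq with hq'def
  have hq' : q'.IsCycle := hq.rotate hxq
  have hq'edges : ∀ e : Sym2 W, e ∈ q'.edges ↔ e ∈ q.edges := fun e =>
    (q.rotate_edges x hxq).perm.mem_iff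
  have he3q' : e3 ∉ q'.edges := fun hc => he3q ((hq'edges e3).mp hc)
  -- maximal path starting with the edge x-z
  classical
  let L : Set ℕ := {n | ∃ (bb : W) (P₂ : H.Walk z bb),
    (Walk.cons hadj3 P₂).IsPath ∧ P₂.length + 1 = n}
  have hL1 : 1 ∈ L := ⟨z, Walk.nil, by
    rw [Walk.cons_isPath_iff]; exact ⟨Walk.IsPath.nil, by simpa using hadj3.ne⟩, rfl⟩
  have hLbdd : BddAbove L := by
    refine ⟨Fintype.card W, fun n hn => ?_⟩
    obtain ⟨bb, P₂, hp, hlen⟩ := hn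
    have hlt := hp.length_lt
    simp only [Walk.length_cons] at hlt
    omega
  have hNL : sSup L ∈ L := Nat.sSup_mem ⟨1, hL1⟩ hLbdd
  obtain ⟨b, P₂, hPpath, hPlen⟩ := hNL
  have hmax : ∀ t, H.Adj b t → t ∈ (Walk.cons hadj3 P₂).support := by
    intro t hadj
    by_contra htP
    have hext : (Walk.cons hadj3 (P₂.concat hadj)).IsPath := by
      have heq : Walk.cons hadj3 (P₂.concat hadj)
          = (Walk.cons hadj3 P₂).concat hadj := (Walk.concat_cons _ _ _).symm
      rw [heq, ← Walk.isPath_reverse_iff, Walk.reverse_concat, Walk.cons_isPath_iff]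
      refine ⟨hPpath.reverse, fun hc => htP ?_⟩
      rwa [Walk.support_reverse, List.mem_reverse] at hc
    have hmem : P₂.length + 1 + 1 ∈ L :=
      ⟨t, P₂.concat hadj, hext, by rw [Walk.length_concat]⟩
    have hle := le_csSup hLbdd hmem
    omega
  have hPlen0 : 0 < (Walk.cons hadj3 P₂).length := by simp
  obtain ⟨x0, c, hc, hbc, hcsub⟩ := end_cycle hdeg hPpath hPlen0 hmax
  have hreach : H.Reachable x0 x := by
    have hx0P : x0 ∈ (Walk.cons hadj3 P₂).support := hcsub x0 c.start_mem_support
    exact ⟨((Walk.cons hadj3 P₂).takeUntil x0 hx0P).reverse⟩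
  have hEcq : c.edges.toFinset = q'.edges.toFinset := hQU x0 x c q' hc hq' hreach
  have hbq' : b ∈ q'.support := by
    obtain ⟨e1, _, he1, _, _, hbe1, _, _⟩ := cycle_edges_at hc hbc
    have h1 : e1 ∈ c.edges.toFinset := List.mem_toFinset.mpr he1
    rw [hEcq] at h1
    exact mem_support_of_mem_edges (List.mem_toFinset.mp h1) hbe1
  -- first hit of the cycle support along P₂
  obtain ⟨t, ht, W1, hW1path, hW1supp, hW1edges, hW1drop⟩ :=
    first_hit (T := {w | w ∈ q'.support}) P₂ hPpath.of_cons hbq'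
  have hxP₂ : x ∉ P₂.support := ((Walk.cons_isPath_iff _ _).mp hPpath).2
  have htx : t ≠ x := fun hc => hxP₂ (hc ▸ hW1supp t W1.end_mem_support)
  -- arc of the cycle from x to t
  obtain ⟨y', h', r, hq'eq⟩ := Walk.not_nil_iff.mp hq'.not_nil
  have hrpath : r.IsPath := ((Walk.cons_isCycle_iff r h').mp (hq'eq ▸ hq')).1
  have htr : t ∈ r.support := by
    have ht' : t ∈ q'.support := ht
    rw [hq'eq, Walk.support_cons] at ht'
    rcases List.mem_cons.mp ht' with rfl | h2
    · exact absurd rfl htx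
    · exact h2
  have htrr : t ∈ r.reverse.support := by
    rw [Walk.support_reverse]; simpa using htr
  set arc := r.reverse.takeUntil t htrr with harc
  have harc_path : arc.IsPath := hrpath.reverse.takeUntil htrr
  have harc_supp : ∀ w ∈ arc.support, w ∈ q'.support := by
    intro w hw
    have h1 : w ∈ r.reverse.support := r.reverse.support_takeUntil_subset htrr hw
    rw [Walk.support_reverse, List.mem_reverse] at h1
    rw [hq'eq, Walk.support_cons]
    exact List.mem_cons_of_mem _ h1
  have harc_edges : ∀ e ∈ arc.edges, e ∈ q'.edges := by
    intro e he
    have h1 : e ∈ r.reverse.edges := r.reverse.edges_takeUntil_subset htrr he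
    rw [Walk.edges_reverse, List.mem_reverse] at h1
    rw [hq'eq, Walk.edges_cons]
    exact List.mem_cons_of_mem _ h1
  -- the new cycle
  set Q := W1.append arc.reverse with hQ
  have hQpath : Q.IsPath := by
    rw [Walk.isPath_def, hQ, Walk.support_append, List.nodup_append]
    refine ⟨hW1path.support_nodup, ?_, ?_⟩
    · have : arc.reverse.support.Nodup := harc_path.reverse.support_nodup
      rw [arc.reverse.support_eq_cons] at this
      exact (List.nodup_cons.mp this).2
    · -- disjointness
      intro w hw b hw' hwb
      subst hwb
      have hwq' : w ∈ q'.support := by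
        have h1 : w ∈ arc.reverse.support := by
          rw [arc.reverse.support_eq_cons]
          exact List.mem_cons_of_mem _ hw'
        rw [Walk.support_reverse, List.mem_reverse] at h1
        exact harc_supp w h1
      have hwt : w ≠ t := by
        intro hwt
        have : arc.reverse.support.Nodup := harc_path.reverse.support_nodup
        rw [arc.reverse.support_eq_cons] at this
        exact (List.nodup_cons.mp this).1 (hwt ▸ hw')
      -- w ∈ W1.support, w ≠ t, so w ∈ dropLast, so w ∉ q'.support
      have hW1ne : W1.support ≠ [] := W1.support_ne_nil
      have hdecomp := List.dropLast_append_getLast hW1ne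
      rw [← hdecomp] at hw
      rcases List.mem_append.mp hw with hdl | hlast
      · exact hW1drop w hdl hwq'
      · have : w = t := by
          have := List.mem_singleton.mp hlast
          rw [this, W1.getLast_support]
        exact hwt this
  have hnoedge : s(x, z) ∉ Q.edges := by
    rw [hQ, Walk.edges_append]
    intro hmem
    rcases List.mem_append.mp hmem with h1 | h1
    · exact hxP₂ (hW1supp x (mem_support_of_mem_edges h1 (by simp)))
    · rw [Walk.edges_reverse, List.mem_reverse] at h1
      exact he3q' (hsz ▸ harc_edges _ h1)
  have hc3 : (Walk.cons hadj3 Q).IsCycle := (Walk.cons_isCycle_iff Q hadj3).mpr ⟨hQpath, hnoedge⟩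
  have hfin := hQU x x (Walk.cons hadj3 Q) q' hc3 hq' (SimpleGraph.Reachable.refl x)
  have he3in : e3 ∈ (Walk.cons hadj3 Q).edges := by
    rw [Walk.edges_cons, hsz]
    exact List.mem_cons_self
  have : e3 ∈ q'.edges := by
    have h1 : e3 ∈ (Walk.cons hadj3 Q).edges.toFinset := List.mem_toFinset.mpr he3in
    rw [hfin] at h1
    exact List.mem_toFinset.mp h1
  exact he3q' this

end LemB2

section LemB3

variable [DecidableEq W] [Fintype W]

lemma support_getElem_mem_edges {H : SimpleGraph W} :
    ∀ {a b : W} (w : H.Walk a b) (i : ℕ) (hi : i < w.edges.length)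
      (hi' : i < w.support.length), w.support[i] ∈ w.edges[i] := by
  intro a b w
  induction w with
  | nil => intro i hi _; simp at hi
  | @cons a c b h t ih =>
    intro i hi hi'
    cases i with
    | zero => simp
    | succ i =>
      have h1 : i < t.edges.length := by simpa using hi
      have h2 : i < t.support.length := by
        rw [Walk.length_support]; rw [Walk.length_edges] at h1; omega
      simpa using ih i h1 h2

lemma cycle_indexOf_lt {H : SimpleGraph W} {u : W} {q : H.Walk u u} (hq : q.IsCycle)
    {v : W} (hv : v ∈ q.support) : q.support.idxOf v < q.edges.length := by
  rw [Walk.length_edges]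
  cases q with
  | nil => exact absurd hq.not_nil (by simp)
  | @cons _ y _ h r =>
    by_cases hvu : v = u
    · subst hvu
      rw [Walk.support_cons, List.idxOf_cons_self]
      simp
    · have hvr : v ∈ r.support := by
        rw [Walk.support_cons] at hv
        rcases List.mem_cons.mp hv with rfl | h2
        · exact absurd rfl hvu
        · exact h2
      rw [Walk.support_cons, List.idxOf_cons_ne _ (fun he => hvu he.symm)]
      have hrne : r.support ≠ [] := r.support_ne_nil
      have hdecomp := List.dropLast_append_getLast hrne
      have hlastu : r.support.getLast hrne = u := r.getLast_support
      have hvdl : v ∈ r.support.dropLast := by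
        rw [← hdecomp] at hvr
        rcases List.mem_append.mp hvr with h2 | h2
        · exact h2
        · exact absurd ((List.mem_singleton.mp h2).trans hlastu) hvu
      have hidx : r.support.idxOf v = r.support.dropLast.idxOf v := by
        conv_lhs => rw [← hdecomp]
        exact List.idxOf_append_of_mem hvdl
      have hlt : r.support.dropLast.idxOf v < r.support.dropLast.length :=
        List.idxOf_lt_length_iff.mpr hvdl
      have hdll : r.support.dropLast.length = r.length := by
        rw [List.length_dropLast, Walk.length_support]
        omega
      rw [Walk.length_cons]
      omega

lemma cycle_indexOf_getElem {H : SimpleGraph W} {u : W} {q : H.Walk u u} (hq : q.IsCycle)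
    (j : ℕ) (hj : j < q.edges.length) (hj' : j < q.support.length) :
    q.support.idxOf (q.support[j]) = j := by
  cases q with
  | nil => simp at hj
  | @cons _ y _ h r =>
    have hrpath : r.IsPath := ((Walk.cons_isCycle_iff r h).mp hq).1
    cases j with
    | zero => simp [Walk.support_cons, List.idxOf_cons_self]
    | succ j =>
      have hj2 : j < r.support.dropLast.length := by
        rw [List.length_dropLast, Walk.length_support]
        rw [Walk.length_edges, Walk.length_cons] at hj
        omega
      have hj3 : j < r.support.length := by
        rw [List.length_dropLast] at hj2; omega
      have hget : (Walk.cons h r).support[j + 1] = r.support[j] := by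
        simp [Walk.support_cons]
      rw [hget]
      have hgetdl : r.support.dropLast[j] = r.support[j] := List.getElem_dropLast hj2
      have hrne : r.support ≠ [] := r.support_ne_nil
      have hdecomp := List.dropLast_append_getLast hrne
      have hlastu : r.support.getLast hrne = u := r.getLast_support
      have hnodup : r.support.Nodup := hrpath.support_nodup
      have hvdl : r.support[j] ∈ r.support.dropLast := by
        have := List.getElem_mem (l := r.support.dropLast) (n := j) hj2
        rwa [hgetdl] at this
      have hn2 : (r.support.dropLast ++ [r.support.getLast hrne]).Nodup := by
        rw [hdecomp]; exact hnodup
      have hdisj := (List.nodup_append.mp hn2).2.2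
      have hvu : r.support[j] ≠ u := by
        intro heq
        exact hdisj _ hvdl _ (List.mem_singleton.mpr rfl) (heq.trans hlastu.symm)
      rw [Walk.support_cons, List.idxOf_cons_ne _ (fun he => hvu he.symm)]
      have key : ∀ v ∈ r.support.dropLast,
          r.support.idxOf v = r.support.dropLast.idxOf v := by
        intro v hv
        conv_lhs => rw [← hdecomp]
        exact List.idxOf_append_of_mem hv
      have hnodupdl : r.support.dropLast.Nodup := hnodup.sublist (List.dropLast_sublist _)
      have hfin : r.support.dropLast.idxOf (r.support.dropLast[j]) = j :=
        hnodupdl.idxOf_getElem j hj2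
      rw [hgetdl] at hfin
      rw [key _ hvdl, hfin]

end LemB3

section LemB4

variable [DecidableEq W] [Fintype W]

lemma lemB_aux : ∀ (n : ℕ) (H : SimpleGraph W), QuasiUnicyclic H → H.edgeSet.ncard ≤ n →
    ∃ f : W → Sym2 W, (∀ v, v ∈ f v) ∧ ∀ e ∈ H.edgeSet, ∃ v, f v = e := by
  intro n
  induction n with
  | zero =>
    intro H _ hcard
    have hempty : H.edgeSet = ∅ := by
      rw [← Set.ncard_eq_zero (H.edgeSet.toFinite)]; omega
    exact ⟨fun v => s(v, v), fun v => by simp, fun e he => by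
      rw [hempty] at he; exact absurd he (Set.notMem_empty e)⟩
  | succ n ih =>
    intro H hQU hcard
    by_cases hE : H.edgeSet = ∅
    · exact ⟨fun v => s(v, v), fun v => by simp, fun e he => by
        rw [hE] at he; exact absurd he (Set.notMem_empty e)⟩
    by_cases hdeg1 : ∃ v, (H.neighborSet v).ncard = 1
    · -- CASE B: a vertex of degree one; peel its unique edge
      obtain ⟨v, hv⟩ := hdeg1
      obtain ⟨y, hy⟩ := Set.ncard_eq_one.mp hv
      have hadj : H.Adj v y := by
        have : y ∈ H.neighborSet v := by rw [hy]; rfl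
        exact this
      have hein : s(v, y) ∈ H.edgeSet := hadj
      set H' := H.deleteEdges {s(v, y)} with hH'
      have hss : H'.edgeSet = H.edgeSet \ {s(v, y)} := SimpleGraph.edgeSet_deleteEdges _
      have hlt : H'.edgeSet.ncard ≤ n := by
        have h1 : H'.edgeSet.ncard < H.edgeSet.ncard := by
          rw [hss]
          exact Set.ncard_diff_singleton_lt_of_mem hein (H.edgeSet.toFinite)
        omega
      obtain ⟨f', hsel', hcov'⟩ := ih H' (QU_mono (H.deleteEdges_le _) hQU) hlt
      refine ⟨Function.update f' v s(v, y), ?_, ?_⟩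
      · intro w
        by_cases hwv : w = v
        · subst hwv; rw [Function.update_self]; simp
        · rw [Function.update_of_ne hwv]; exact hsel' w
      · intro e' he'
        by_cases hee : e' = s(v, y)
        · exact ⟨v, by rw [Function.update_self, hee]⟩
        · have he'2 : e' ∈ H'.edgeSet := by
            rw [hss]; exact ⟨he', by simpa using hee⟩
          obtain ⟨w, hw⟩ := hcov' e' he'2
          have hwv : w ≠ v := by
            rintro rfl
            have hv_in : w ∈ e' := hw ▸ hsel' w
            have ho := Sym2.other_spec hv_in
            have hadj2 : H.Adj w (Sym2.Mem.other hv_in) := by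
              rw [← SimpleGraph.mem_edgeSet, ho]; exact he'
            have : Sym2.Mem.other hv_in ∈ H.neighborSet w := hadj2
            rw [hy] at this
            rw [Set.mem_singleton_iff] at this
            rw [this] at ho
            exact hee ho.symm
          exact ⟨w, by rw [Function.update_of_ne hwv]; exact hw⟩
    · -- CASE C: no degree-one vertices but some edge: find a cycle, peel it whole
      push_neg at hdeg1
      obtain ⟨e0, he0⟩ := Set.nonempty_iff_ne_empty.mpr hE
      obtain ⟨a0, b0⟩ := e0
      have hadjab : H.Adj a0 b0 := he0
      -- a maximal path
      classical
      let L : Set ℕ := {m | ∃ (aa bb : W) (P : H.Walk aa bb), P.IsPath ∧ P.length = m}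
      have hL1 : 1 ∈ L := ⟨a0, b0, Walk.cons hadjab Walk.nil, by
        rw [Walk.cons_isPath_iff]; exact ⟨Walk.IsPath.nil, by simpa using hadjab.ne⟩, rfl⟩
      have hLbdd : BddAbove L := by
        refine ⟨Fintype.card W, fun m hm => ?_⟩
        obtain ⟨aa, bb, P, hp, hlen⟩ := hm
        have := hp.length_lt
        omega
      have hNL : sSup L ∈ L := Nat.sSup_mem ⟨1, hL1⟩ hLbdd
      obtain ⟨a, b, P, hP, hPlen⟩ := hNL
      have hPlen1 : 0 < P.length := by
        have := le_csSup hLbdd hL1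
        omega
      have hmax : ∀ x, H.Adj b x → x ∈ P.support := by
        intro t hadj
        by_contra htP
        have hext : (P.concat hadj).IsPath := by
          rw [← Walk.isPath_reverse_iff, Walk.reverse_concat, Walk.cons_isPath_iff]
          refine ⟨hP.reverse, fun hc => htP ?_⟩
          rwa [Walk.support_reverse, List.mem_reverse] at hc
        have hmem : P.length + 1 ∈ L := ⟨a, t, P.concat hadj, hext, by rw [Walk.length_concat]⟩
        have hle := le_csSup hLbdd hmem
        omega
      obtain ⟨x0, c, hc, hbc, hcsub⟩ := end_cycle hdeg1 hP hPlen1 hmax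
      have hclosed := cycle_edge_closed hQU hdeg1 hc
      -- peel the cycle's edges
      set H' := H.deleteEdges {e | e ∈ c.edges} with hH'
      have hss : H'.edgeSet = H.edgeSet \ {e | e ∈ c.edges} :=
        SimpleGraph.edgeSet_deleteEdges _
      obtain ⟨e1, _, he1, _, _, _, _, _⟩ := cycle_edges_at_base hc
      have he1H : e1 ∈ H.edgeSet := c.edges_subset_edgeSet he1
      have hsub : H'.edgeSet ⊆ H.edgeSet := by rw [hss]; exact Set.diff_subset
      have hssub : H'.edgeSet ⊂ H.edgeSet := by
        rw [Set.ssubset_iff_of_subset hsub]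
        exact ⟨e1, he1H, by rw [hss]; exact fun hc2 => hc2.2 he1⟩
      have hlt : H'.edgeSet.ncard ≤ n := by
        have := Set.ncard_lt_ncard hssub (H.edgeSet.toFinite)
        omega
      obtain ⟨f', hsel', hcov'⟩ := ih H' (QU_mono (H.deleteEdges_le _) hQU) hlt
      refine ⟨fun v => if hv : v ∈ c.support
        then c.edges[c.support.idxOf v]'(cycle_indexOf_lt hc hv) else f' v, ?_, ?_⟩
      · intro v
        by_cases hv : v ∈ c.support
        · simp only [dif_pos hv]
          have hlt1 := cycle_indexOf_lt hc hv
          have hlt2 : c.support.idxOf v < c.support.length :=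
            List.idxOf_lt_length_iff.mpr hv
          have hmem := support_getElem_mem_edges c _ hlt1 hlt2
          rwa [List.getElem_idxOf hlt2] at hmem
        · simp only [dif_neg hv]; exact hsel' v
      · intro e' he'
        by_cases hec : e' ∈ c.edges
        · obtain ⟨j, hj, hje⟩ := List.getElem_of_mem hec
          have hj' : j < c.support.length := by
            rw [Walk.length_support]; rw [Walk.length_edges] at hj; omega
          have hvmem : c.support[j] ∈ c.support := List.getElem_mem hj'
          have hidx : c.support.idxOf (c.support[j]) = j :=
            cycle_indexOf_getElem hc j hj hj'
          refine ⟨c.support[j], ?_⟩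
          simp only [dif_pos hvmem]
          have h1 : c.edges[c.support.idxOf (c.support[j])]? = some e' := by
            rw [hidx, List.getElem?_eq_getElem hj, hje]
          rw [List.getElem?_eq_getElem (cycle_indexOf_lt hc hvmem)] at h1
          exact Option.some.inj h1
        · have he'2 : e' ∈ H'.edgeSet := by
            rw [hss]; exact ⟨he', hec⟩
          obtain ⟨w, hw⟩ := hcov' e' he'2
          have hwc : w ∉ c.support := by
            intro hwc
            have hw_in : w ∈ e' := hw ▸ hsel' w
            exact hec (hclosed w hwc e' he' hw_in)
          exact ⟨w, by simp only [dif_neg hwc]; exact hw⟩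

/-- KEY LEMMA B: a finite quasi-unicyclic graph admits a covering 1-selection. -/
theorem selection_of_quasiUnicyclic {H : SimpleGraph W} (hQU : QuasiUnicyclic H) :
    ∃ f : W → Sym2 W, (∀ v, v ∈ f v) ∧ ∀ e ∈ H.edgeSet, ∃ v, f v = e :=
  lemB_aux H.edgeSet.ncard H hQU le_rfl

end LemB4

end RobustAux

/-- `χ₁(G)` equals the minimum number of classes in a partition of `V(G)`
into sets each inducing a quasi-unicyclic subgraph. -/
theorem robustChromNum_eq_min_quasiUnicyclic_partition
    (V : Type) [Fintype V] [DecidableEq V] (G : SimpleGraph V) :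
    robustChromNum G =
      sInf {k : ℕ | ∃ c : V → Fin k,
        ∀ i : Fin k, QuasiUnicyclic (G.induce (c ⁻¹' {i}))} := by
  classical
  set B := {k : ℕ | ∃ c : V → Fin k,
    ∀ i : Fin k, QuasiUnicyclic (G.induce (c ⁻¹' {i}))} with hB
  set A := {m : ℕ | ∃ f : V → Sym2 V, IsOneSelection G f ∧
    chromNum (oneRemoved G f) = m} with hA
  have hBne : B.Nonempty := by
    refine ⟨Fintype.card V, Fintype.equivFin V, fun i => ?_⟩
    apply RobustAux.QU_of_subsingleton
    constructor
    rintro ⟨x, hx⟩ ⟨y, hy⟩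
    have hx' : Fintype.equivFin V x = i := hx
    have hy' : Fintype.equivFin V y = i := hy
    exact Subtype.ext ((Fintype.equivFin V).injective (hx'.trans hy'.symm))
  have hAne : A.Nonempty :=
    ⟨chromNum (oneRemoved G (fun v => s(v, v))), fun v => s(v, v),
      fun v => by simp, rfl⟩
  apply le_antisymm
  · -- robustChromNum G ≤ sInf B
    obtain ⟨c, hc⟩ := Nat.sInf_mem hBne
    have hF := fun i : Fin (sInf B) => RobustAux.selection_of_quasiUnicyclic (hc i)
    choose F hFsel hFcov using hF
    set f : V → Sym2 V := fun v => Sym2.map Subtype.val (F (c v) ⟨v, rfl⟩) with hf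
    have key : ∀ (j : Fin (sInf B)) (x : ↥(c ⁻¹' {j})),
        f (x : V) = Sym2.map Subtype.val (F j x) := by
      rintro j ⟨xv, hxv⟩
      have hxv' : c xv = j := hxv
      subst hxv'
      rfl
    have hsel : IsOneSelection G f := by
      intro v
      rw [hf]
      exact Sym2.mem_map.mpr ⟨⟨v, rfl⟩, hFsel (c v) _, rfl⟩
    have hcol : (oneRemoved G f).Colorable (sInf B) := by
      refine ⟨SimpleGraph.Coloring.mk c ?_⟩
      intro a b hadj hcab
      rw [oneRemoved, SimpleGraph.deleteEdges_adj] at hadj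
      obtain ⟨hGadj, hnr⟩ := hadj
      apply hnr
      have hamem : a ∈ c ⁻¹' {c a} := rfl
      have hbmem : b ∈ c ⁻¹' {c a} := by
        simp only [Set.mem_preimage, Set.mem_singleton_iff]
        exact hcab.symm
      have hedge : (G.induce (c ⁻¹' {c a})).Adj ⟨a, hamem⟩ ⟨b, hbmem⟩ := hGadj
      obtain ⟨x, hx⟩ := hFcov (c a) s(⟨a, hamem⟩, ⟨b, hbmem⟩)
        ((SimpleGraph.mem_edgeSet _).mpr hedge)
      refine ⟨(x : V), ?_⟩
      rw [key (c a) x, hx]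
      simp
    have h1 : chromNum (oneRemoved G f) ≤ sInf B := Nat.sInf_le hcol
    have h2 : robustChromNum G ≤ chromNum (oneRemoved G f) :=
      Nat.sInf_le ⟨f, hsel, rfl⟩
    exact h2.trans h1
  · -- sInf B ≤ robustChromNum G
    obtain ⟨f, hsel, hchrom⟩ := Nat.sInf_mem hAne
    have hcolorable : (oneRemoved G f).Colorable (chromNum (oneRemoved G f)) := by
      have hne : {n : ℕ | (oneRemoved G f).Colorable n}.Nonempty :=
        ⟨Fintype.card V, SimpleGraph.colorable_of_fintype _⟩
      exact Nat.sInf_mem hne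
    obtain ⟨C⟩ := hcolorable
    have hmem : chromNum (oneRemoved G f) ∈ B := by
      refine ⟨⇑C, fun i => ?_⟩
      set S := ⇑C ⁻¹' {i} with hS
      set f' : ↥S → Sym2 ↥S := fun x =>
        if h : ∃ e : Sym2 ↥S, Sym2.map Subtype.val e = f (x : V) then h.choose
        else s(x, x) with hf'
      have hsel' : ∀ x : ↥S, x ∈ f' x := by
        intro x
        rw [hf']
        by_cases h : ∃ e : Sym2 ↥S, Sym2.map Subtype.val e = f (x : V)
        · simp only [dif_pos h]
          have hcs := h.choose_spec
          have hxin : (x : V) ∈ Sym2.map Subtype.val h.choose := by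
            rw [hcs]; exact hsel (x : V)
          obtain ⟨y, hy, hyx⟩ := Sym2.mem_map.mp hxin
          have : y = x := Subtype.ext hyx
          rwa [this] at hy
        · simp only [dif_neg h]
          simp
      have hcov' : ∀ e ∈ (G.induce S).edgeSet, ∃ x : ↥S, f' x = e := by
        intro e he
        induction e with
        | h x y =>
          have hadj : (G.induce S).Adj x y := (SimpleGraph.mem_edgeSet _).mp he
          have hGadj : G.Adj (x : V) (y : V) := hadj
          have hCxy : C (x : V) = C (y : V) := by
            have hx' : C (x : V) = i := x.2
            have hy' : C (y : V) = i := y.2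
            exact hx'.trans hy'.symm
          have hnadj : ¬ (oneRemoved G f).Adj (x : V) (y : V) :=
            fun h => C.valid h hCxy
          rw [oneRemoved, SimpleGraph.deleteEdges_adj] at hnadj
          push_neg at hnadj
          obtain ⟨w, hw⟩ := hnadj hGadj
          have hgen : ∀ (z : ↥S), f (z : V) = s((x : V), (y : V)) →
              ∃ x' : ↥S, f' x' = s(x, y) := by
            intro z hfz
            refine ⟨z, ?_⟩
            have hcond : ∃ e : Sym2 ↥S, Sym2.map Subtype.val e = f (z : V) :=
              ⟨s(x, y), by rw [hfz]; simp⟩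
            rw [hf']
            simp only [dif_pos hcond]
            have hcs := hcond.choose_spec
            have heq2 : Sym2.map Subtype.val hcond.choose
                = Sym2.map Subtype.val s(x, y) := by
              rw [hcs, hfz]; simp
            exact Sym2.map.injective Subtype.val_injective heq2
          have hwm : w = (x : V) ∨ w = (y : V) := by
            have := hsel w
            rw [hw] at this
            exact Sym2.mem_iff.mp this
          rcases hwm with h | h
          · exact hgen ⟨w, by rw [h]; exact x.2⟩ hw
          · exact hgen ⟨w, by rw [h]; exact y.2⟩ hw
      exact RobustAux.quasiUnicyclic_of_selection hsel' hcov'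
    have := Nat.sInf_le hmem
    calc sInf B ≤ chromNum (oneRemoved G f) := this
      _ = robustChromNum G := hchrom
end

section
/- Every finite graph G satisfies ⌈χ(G)/3⌉ ≤ χ₁(G) ≤ χ(G). -/
open SimpleGraph

lemma three_color_aux : ∀ (n : ℕ) (V : Type) [Fintype V] (g : V → V), Fintype.card V = n →
    ∃ c : V → Fin 3, ∀ v, g v ≠ v → c v ≠ c (g v) := by
  intro n
  induction n using Nat.strong_induction_on with
  | _ n ih =>
    intro V _ g hcard
    classical
    cases isEmpty_or_nonempty V with
    | inl hV => exact ⟨fun _ => 0, fun v => (hV.false v).elim⟩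
    | inr hV =>
      have hn : 0 < n := hcard ▸ Fintype.card_pos
      by_cases hsurj : Function.Surjective g
      · -- surjective hence injective
        have hinj : Function.Injective g := (Finite.injective_iff_surjective (f := g)).mpr hsurj
        obtain ⟨v⟩ := hV
        have hper : v ∈ Function.periodicPts g := by
          obtain ⟨i, j, hne, heq⟩ := Finite.exists_ne_map_eq_of_infinite (fun k : ℕ => g^[k] v)
          rcases hne.lt_or_gt with hlt | hlt
          · have h2 : g^[i] (g^[i + (j - i) - i] v) = g^[i] v := by
              rw [← Function.iterate_add_apply, show i + (i + (j-i) - i) = j by omega]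
              exact heq.symm
            have h3 : g^[j - i] v = v := by
              have := hinj.iterate i h2
              rwa [show i + (j-i) - i = j - i by omega] at this
            exact Function.mk_mem_periodicPts (by omega) h3
          · have h2 : g^[j] (g^[i - j] v) = g^[j] v := by
              rw [← Function.iterate_add_apply, show j + (i - j) = i by omega]
              exact heq
            have h3 : g^[i - j] v = v := hinj.iterate j h2
            exact Function.mk_mem_periodicPts (by omega) h3
        set p := Function.minimalPeriod g v with hpdef
        have hp : 0 < p := Function.minimalPeriod_pos_of_mem_periodicPts hper
        have hpv : g^[p] v = v := Function.iterate_minimalPeriod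
        set S : Finset V := (Finset.range p).image (fun k => g^[k] v) with hSdef
        have hvS : v ∈ S := Finset.mem_image.2 ⟨0, Finset.mem_range.2 hp, rfl⟩
        have hex : ∀ u, u ∈ S → ∃ k, k < p ∧ g^[k] v = u := by
          intro u hu
          obtain ⟨k, hk, hke⟩ := Finset.mem_image.1 hu
          exact ⟨k, Finset.mem_range.1 hk, hke⟩
        have hmemS : ∀ k, k < p → g^[k] v ∈ S := fun k hk =>
          Finset.mem_image.2 ⟨k, Finset.mem_range.2 hk, rfl⟩
        have hSclosed : ∀ u, u ∈ S → g u ∈ S := by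
          intro u hu
          obtain ⟨k, hk, rfl⟩ := hex u hu
          rw [← Function.iterate_succ_apply' g k v]
          by_cases h : k + 1 < p
          · exact hmemS _ h
          · have hkp : k.succ = p := by omega
            rw [hkp, hpv]; exact hvS
        have hScompl : ∀ u, u ∉ S → g u ∉ S := by
          intro u hu hgu
          obtain ⟨k, hk, hkeq⟩ := hex _ hgu
          apply hu
          rcases Nat.eq_zero_or_pos k with h0 | h0
          · subst h0
            have h1 : g (g^[p-1] v) = g u := by
              rw [← Function.iterate_succ_apply' g (p-1) v, show (p - 1).succ = p by omega, hpv]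
              exact hkeq
            rw [← hinj h1]
            exact hmemS _ (by omega)
          · have h1 : g (g^[k-1] v) = g u := by
              rw [← Function.iterate_succ_apply' g (k-1) v, show (k - 1).succ = k by omega]
              exact hkeq
            rw [← hinj h1]
            exact hmemS _ (by omega)
        have hcard' : Fintype.card {u : V // u ∉ S} < n := by
          have h1 : Fintype.card {u : V // u ∉ S} = Fintype.card V - Fintype.card {u : V // u ∈ S} :=
            Fintype.card_subtype_compl _
          have h2 : Fintype.card {u : V // u ∈ S} = S.card := Fintype.card_coe S
          have h3 : 1 ≤ S.card := Finset.card_pos.2 ⟨v, hvS⟩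
          have h4 : S.card ≤ Fintype.card V := S.card_le_univ
          omega
        obtain ⟨c', hc'⟩ := ih _ hcard' {u : V // u ∉ S}
          (fun u => ⟨g u.1, hScompl u.1 u.2⟩) rfl
        set idx : V → ℕ := fun u => if h : u ∈ S then Nat.find (hex u h) else 0 with hidxdef
        have hidx_lt : ∀ u (h : u ∈ S), idx u < p ∧ g^[idx u] v = u := by
          intro u h
          simp only [hidxdef, dif_pos h]
          exact Nat.find_spec (hex u h)
        have hidx_min : ∀ u (h : u ∈ S), ∀ m, m < p → g^[m] v = u → idx u ≤ m := by
          intro u h m hm he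
          simp only [hidxdef, dif_pos h]
          exact Nat.find_le ⟨hm, he⟩
        have hidxv : idx v = 0 := Nat.le_zero.1 (hidx_min v hvS 0 hp rfl)
        set col : ℕ → Fin 3 := fun k => if k = p - 1 then 2 else if k % 2 = 0 then 0 else 1
          with hcoldef
        have hstep : ∀ u (h : u ∈ S), g u ≠ u → col (idx u) ≠ col (idx (g u)) := by
          intro u h hgu
          obtain ⟨hk, hke⟩ := hidx_lt u h
          have hgS := hSclosed u h
          have hgk : g^[idx u + 1] v = g u := by rw [Function.iterate_succ_apply', hke]
          by_cases hkp : idx u + 1 < p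
          · have h1 : idx (g u) = idx u + 1 := by
              have hle : idx (g u) ≤ idx u + 1 := hidx_min _ hgS _ hkp hgk
              rcases Nat.lt_or_ge (idx (g u)) (idx u + 1) with hlt | hge
              · exfalso
                obtain ⟨hm, hme⟩ := hidx_lt _ hgS
                have heq2 : g^[idx (g u)] (g^[idx u + 1 - idx (g u)] v) = g^[idx (g u)] v := by
                  rw [← Function.iterate_add_apply,
                    show idx (g u) + (idx u + 1 - idx (g u)) = idx u + 1 by omega, hgk, hme]
                have h2 : g^[idx u + 1 - idx (g u)] v = v := hinj.iterate _ heq2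
                have h5 : p ≤ idx u + 1 - idx (g u) :=
                  Function.IsPeriodicPt.minimalPeriod_le (by omega) h2
                omega
              · omega
            rw [h1]
            by_cases h2 : idx u + 1 = p - 1
            · have hk' : idx u ≠ p - 1 := by omega
              simp only [hcoldef, if_neg hk', if_pos h2]
              split <;> decide
            · have hk' : idx u ≠ p - 1 := by omega
              simp only [hcoldef, if_neg hk', if_neg h2]
              by_cases hk2 : idx u % 2 = 0
              · rw [if_pos hk2, if_neg (by omega : ¬ (idx u + 1) % 2 = 0)]; decide
              · rw [if_neg hk2, if_pos (by omega : (idx u + 1) % 2 = 0)]; decide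
          · have hkp' : idx u + 1 = p := by omega
            have hguv : g u = v := by rw [← hgk, hkp', hpv]
            have hp2 : 2 ≤ p := by
              by_contra h'
              have hp1 : p = 1 := by omega
              have hk0 : idx u = 0 := by omega
              apply hgu
              rw [hguv, ← hke, hk0]
              simp
            rw [hguv, hidxv]
            have hk1 : idx u = p - 1 := by omega
            simp only [hcoldef, if_pos hk1, if_neg (show ¬ (0:ℕ) = p - 1 by omega)]
            decide
        refine ⟨fun u => if h : u ∈ S then col (idx u) else c' ⟨u, h⟩, ?_⟩
        intro u hgu
        by_cases h : u ∈ S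
        · simp only [dif_pos h, dif_pos (hSclosed u h)]
          exact hstep u h hgu
        · simp only [dif_neg h, dif_neg (hScompl u h)]
          exact hc' ⟨u, h⟩ (fun hEq => hgu (congrArg Subtype.val hEq))
      · -- not surjective
        rw [Function.Surjective] at hsurj
        push_neg at hsurj
        obtain ⟨v, hv⟩ := hsurj
        have hcard' : Fintype.card {u : V // u ≠ v} < n := by
          have h1 : Fintype.card {u : V // ¬ u = v} = Fintype.card V - Fintype.card {u : V // u = v} :=
            Fintype.card_subtype_compl _
          have h2 : Fintype.card {u : V // u = v} = 1 := Fintype.card_subtype_eq v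
          have h3 : Fintype.card {u : V // u ≠ v} = Fintype.card {u : V // ¬ u = v} := rfl
          omega
        obtain ⟨c', hc'⟩ := ih _ hcard' {u : V // u ≠ v} (fun u => ⟨g u.1, hv u.1⟩) rfl
        refine ⟨fun u => if h : u = v then c' ⟨g v, hv v⟩ + 1 else c' ⟨u, h⟩, ?_⟩
        intro u hgu
        by_cases h : u = v
        · subst h
          simp only [dif_pos rfl, dif_neg (hv u)]
          have h3 : ∀ x : Fin 3, x + 1 ≠ x := by decide
          exact h3 _
        · simp only [dif_neg h, dif_neg (hv u)]
          exact hc' ⟨u, h⟩ (fun hEq => hgu (congrArg Subtype.val hEq))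

/-- Every finite graph `G` satisfies `⌈χ(G)/3⌉ ≤ χ₁(G) ≤ χ(G)`. -/
theorem robustChromNum_bounds (V : Type) [Fintype V] (G : SimpleGraph V) :
    (chromNum G + 2) / 3 ≤ robustChromNum G ∧ robustChromNum G ≤ chromNum G := by
  classical
  have hdiag : IsOneSelection G (fun v => s(v, v)) := fun v => Sym2.mem_mk_left v v
  have hGdiag : oneRemoved G (fun v : V => s(v, v)) = G := by
    ext a b
    simp only [oneRemoved, SimpleGraph.deleteEdges_adj, Set.mem_range]
    constructor
    · exact fun h => h.1
    · intro h
      refine ⟨h, ?_⟩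
      rintro ⟨w, hw⟩
      rw [Sym2.eq_iff] at hw
      rcases hw with ⟨h1, h2⟩ | ⟨h1, h2⟩ <;> exact G.ne_of_adj h (h1 ▸ h2 ▸ rfl)
  constructor
  · have hne : {m | ∃ f : V → Sym2 V, IsOneSelection G f ∧ chromNum (oneRemoved G f) = m}.Nonempty :=
      ⟨_, _, hdiag, rfl⟩
    apply le_csInf hne
    rintro b ⟨f, hf, rfl⟩
    suffices h : chromNum G ≤ chromNum (oneRemoved G f) * 3 by omega
    have hne2 : {n : ℕ | (oneRemoved G f).Colorable n}.Nonempty :=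
      ⟨Fintype.card V, (oneRemoved G f).colorable_of_fintype⟩
    have hcol : (oneRemoved G f).Colorable (chromNum (oneRemoved G f)) :=
      Nat.sInf_mem hne2
    obtain ⟨C⟩ := hcol
    let g : V → V := fun v => Sym2.Mem.other (hf v)
    have hg : ∀ v, f v = s(v, g v) := fun v => (Sym2.other_spec (hf v)).symm
    obtain ⟨c, hc⟩ := three_color_aux (Fintype.card V) V g rfl
    have D : G.Coloring (Fin (chromNum (oneRemoved G f)) × Fin 3) := by
      refine SimpleGraph.Coloring.mk (fun v => (C v, c v)) ?_
      intro u w huw hEq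
      by_cases h2 : (oneRemoved G f).Adj u w
      · exact C.valid h2 (congrArg Prod.fst hEq)
      · have hrange : s(u, w) ∈ Set.range f := by
          simp only [oneRemoved, SimpleGraph.deleteEdges_adj] at h2
          by_contra hcon
          exact h2 ⟨huw, hcon⟩
        obtain ⟨x, hx⟩ := hrange
        rw [hg x, Sym2.eq_iff] at hx
        have hcsnd : c u = c w := congrArg Prod.snd hEq
        rcases hx with ⟨rfl, hgw⟩ | ⟨rfl, hgw⟩
        · exact hc x (hgw ▸ huw.ne') (by rw [hgw]; exact hcsnd)
        · exact hc x (hgw ▸ huw.ne) (by rw [hgw]; exact hcsnd.symm)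
    have hGcol : G.Colorable (chromNum (oneRemoved G f) * 3) := by
      have h1 := D.colorable
      simpa using h1
    exact Nat.sInf_le hGcol
  · apply Nat.sInf_le
    exact ⟨fun v => s(v, v), hdiag, by rw [hGdiag]⟩
end

section
/- For every integer k ≥ 2, the robust independence number of the Kneser graph KG(3k, k) satisfies α₁(KG(3k, k)) ≥ C(3k−1, k−1) + 2. -/
open SimpleGraph

namespace RKtest
open Finset

variable (k : ℕ)

def Aset : Finset (Fin (3*k)) :=
  (Finset.Ico 1 (k+1)).attachFin (by intro m hm; simp [Finset.mem_Ico] at hm; omega)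

def Bset : Finset (Fin (3*k)) :=
  (Finset.Ico (k+1) (2*k+1)).attachFin (by intro m hm; simp [Finset.mem_Ico] at hm; omega)

def Cset : Finset (Fin (3*k)) :=
  (Finset.Ico (2*k+1) (3*k)).attachFin (by intro m hm; simp [Finset.mem_Ico] at hm; omega)

variable {k} (hk : 2 ≤ k)

def zeroF : Fin (3*k) := ⟨0, by omega⟩

def S0set : Finset (Fin (3*k)) := insert (zeroF hk) (Cset k)

lemma mem_Aset {a : Fin (3*k)} : a ∈ Aset k ↔ 1 ≤ a.val ∧ a.val < k+1 := by
  simp [Aset, Finset.mem_attachFin, Finset.mem_Ico]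

lemma mem_Bset {a : Fin (3*k)} : a ∈ Bset k ↔ k+1 ≤ a.val ∧ a.val < 2*k+1 := by
  simp [Bset, Finset.mem_attachFin, Finset.mem_Ico]

lemma mem_Cset {a : Fin (3*k)} : a ∈ Cset k ↔ 2*k+1 ≤ a.val ∧ a.val < 3*k := by
  simp [Cset, Finset.mem_attachFin, Finset.mem_Ico]

lemma mem_S0set {a : Fin (3*k)} : a ∈ S0set hk ↔ a.val = 0 ∨ (2*k+1 ≤ a.val ∧ a.val < 3*k) := by
  simp [S0set, mem_Cset, zeroF, Fin.ext_iff]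

lemma card_Aset : (Aset k).card = k := by
  simp [Aset, Finset.card_attachFin]

lemma card_Bset : (Bset k).card = k := by
  simp [Bset, Finset.card_attachFin]; omega

lemma card_S0set : (S0set hk).card = k := by
  rw [S0set, Finset.card_insert_of_notMem, Cset, Finset.card_attachFin]
  · simp [Nat.card_Ico]; omega
  · simp [mem_Cset, zeroF]

abbrev VK := {s : Finset (Fin (3*k)) // s.card = k}

def vA : VK (k := k) := ⟨Aset k, card_Aset⟩
def vB : VK (k := k) := ⟨Bset k, card_Bset⟩
def vS0 : VK (k := k) := ⟨S0set hk, card_S0set hk⟩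

lemma disj_AB : Disjoint (Aset k) (Bset k) := by
  rw [Finset.disjoint_left]
  intro a ha hb
  rw [mem_Aset] at ha; rw [mem_Bset] at hb; omega

lemma disj_S0A : Disjoint (S0set hk) (Aset k) := by
  rw [Finset.disjoint_left]
  intro a ha hb
  rw [mem_S0set] at ha; rw [mem_Aset] at hb; omega

lemma disj_S0B : Disjoint (S0set hk) (Bset k) := by
  rw [Finset.disjoint_left]
  intro a ha hb
  rw [mem_S0set] at ha; rw [mem_Bset] at hb; omega

lemma zero_not_A : zeroF hk ∉ Aset k := by simp [mem_Aset, zeroF]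
lemma zero_not_B : zeroF hk ∉ Bset k := by simp [mem_Bset, zeroF]

/-- uniqueness: a k-set containing 0 disjoint from A and B is S0. -/
lemma eq_S0 {u : Finset (Fin (3*k))} (hcard : u.card = k) (h0 : zeroF hk ∈ u)
    (hA : Disjoint u (Aset k)) (hB : Disjoint u (Bset k)) : u = S0set hk := by
  apply Finset.eq_of_subset_of_card_le
  · intro x hx
    rw [mem_S0set]
    have hxA : x ∉ Aset k := Finset.disjoint_left.mp hA hx
    have hxB : x ∉ Bset k := Finset.disjoint_left.mp hB hx
    rw [mem_Aset] at hxA; rw [mem_Bset] at hxB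
    have := x.isLt
    omega
  · rw [hcard, card_S0set]

noncomputable def fsel : VK (k := k) → Sym2 (VK (k := k)) := fun v =>
  if v = vA (k := k) then s(vA (k := k), vB (k := k))
  else if v = vB (k := k) then s(vB (k := k), vS0 hk)
  else if Disjoint v.1 (Aset k) then s(v, vA (k := k))
  else if Disjoint v.1 (Bset k) then s(v, vB (k := k))
  else s(v, v)

lemma fsel_sel : IsOneSelection (kneserGraph (3*k) k) (fsel hk) := by
  intro v
  unfold fsel
  split_ifs with h1 h2 h3 h4 <;> simp [Sym2.mem_iff] <;> tauto

end RKtest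

namespace RKtest
open Finset
variable {k : ℕ} (hk : 2 ≤ k)

lemma vA_ne_vB (hk : 2 ≤ k) : vA (k := k) ≠ vB (k := k) := by
  intro h
  have h2 : Disjoint (Aset k) (Aset k) := by
    have := disj_AB (k := k)
    rw [Subtype.ext_iff] at h
    rw [show Bset k = Aset k from h.symm] at this
    exact this
  rw [disjoint_self] at h2
  have := card_Aset (k := k)
  rw [h2] at this
  simp at this
  omega

lemma star_ne_vA {v : VK (k := k)} (h0 : zeroF hk ∈ v.1) : v ≠ vA (k := k) := by
  intro h; rw [h] at h0; exact zero_not_A hk h0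

lemma star_ne_vB {v : VK (k := k)} (h0 : zeroF hk ∈ v.1) : v ≠ vB (k := k) := by
  intro h; rw [h] at h0; exact zero_not_B hk h0

lemma fsel_vA : fsel hk (vA (k := k)) = s(vA (k := k), vB (k := k)) := by
  simp [fsel]

lemma fsel_vB : fsel hk (vB (k := k)) = s(vB (k := k), vS0 hk) := by
  rw [fsel, if_neg (vA_ne_vB hk).symm, if_pos rfl]

lemma fsel_starA {v : VK (k := k)} (h0 : zeroF hk ∈ v.1) (hA : Disjoint v.1 (Aset k)) :
    fsel hk v = s(v, vA (k := k)) := by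
  rw [fsel, if_neg (star_ne_vA hk h0), if_neg (star_ne_vB hk h0), if_pos hA]

lemma fsel_starB {v : VK (k := k)} (h0 : zeroF hk ∈ v.1) (hA : ¬ Disjoint v.1 (Aset k))
    (hB : Disjoint v.1 (Bset k)) : fsel hk v = s(v, vB (k := k)) := by
  rw [fsel, if_neg (star_ne_vA hk h0), if_neg (star_ne_vB hk h0), if_neg hA, if_pos hB]

def starF : Finset (VK (k := k)) := Finset.univ.filter (fun v => zeroF hk ∈ v.1)

def Uset : Finset (VK (k := k)) := insert (vA (k := k)) (insert (vB (k := k)) (starF hk))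

lemma mem_Uset {v : VK (k := k)} :
    v ∈ Uset hk ↔ v = vA (k := k) ∨ v = vB (k := k) ∨ zeroF hk ∈ v.1 := by
  simp [Uset, starF]

/-- key: edges within U are all in the range of fsel. -/
lemma edge_in_range {a b : VK (k := k)} (ha : a ∈ Uset hk) (hb : b ∈ Uset hk)
    (hne : a ≠ b) (hd : Disjoint a.1 b.1) : s(a, b) ∈ Set.range (fsel hk) := by
  rw [mem_Uset] at ha hb
  rcases ha with ha | ha | ha
  · rcases hb with hb | hb | hb
    · exact absurd (ha.trans hb.symm) hne
    · subst ha; subst hb; exact ⟨vA (k := k), fsel_vA hk⟩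
    · -- a = vA, b star : b disjoint from A
      subst ha
      refine ⟨b, ?_⟩
      rw [fsel_starA hk hb (by exact hd.symm), Sym2.eq_swap]
  · rcases hb with hb | hb | hb
    · subst ha; subst hb
      exact ⟨vA (k := k), by rw [fsel_vA hk, Sym2.eq_swap]⟩
    · exact absurd (ha.trans hb.symm) hne
    · -- a = vB, b star
      subst ha
      by_cases hbA : Disjoint b.1 (Aset k)
      · have hbeq : b = vS0 hk := by
          apply Subtype.ext
          exact eq_S0 hk b.2 hb hbA hd.symm
        subst hbeq
        exact ⟨vB (k := k), fsel_vB hk⟩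
      · exact ⟨b, by rw [fsel_starB hk hb hbA hd.symm, Sym2.eq_swap]⟩
  · rcases hb with hb | hb | hb
    · subst hb
      by_cases haA : Disjoint a.1 (Aset k)
      · exact ⟨a, fsel_starA hk ha haA⟩
      · exact absurd hd haA
    · subst hb
      by_cases haA : Disjoint a.1 (Aset k)
      · have haeq : a = vS0 hk := by
          apply Subtype.ext
          exact eq_S0 hk a.2 ha haA hd
        subst haeq
        exact ⟨vB (k := k), by rw [fsel_vB hk, Sym2.eq_swap]⟩
      · exact ⟨a, fsel_starB hk ha haA hd⟩
    · exact absurd hd (Finset.not_disjoint_iff.mpr ⟨zeroF hk, ha, hb⟩)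

end RKtest

namespace RKtest
open Finset
variable {k : ℕ}

lemma vB_not_starF (hk : 2 ≤ k) : vB (k := k) ∉ starF hk := by
  simp only [starF, Finset.mem_filter]
  exact fun h => zero_not_B hk h.2

lemma vA_not_rest (hk : 2 ≤ k) : vA (k := k) ∉ insert (vB (k := k)) (starF hk) := by
  simp only [Finset.mem_insert, starF, Finset.mem_filter]
  rintro (h | h)
  · exact vA_ne_vB hk h
  · exact zero_not_A hk h.2

lemma card_starF (hk : 2 ≤ k) : (starF hk).card = (3*k-1).choose (k-1) := by
  have hbij : (starF hk).card = ((Finset.univ.erase (zeroF hk)).powersetCard (k-1)).card := by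
    apply Finset.card_bij' (i := fun v _ => v.1.erase (zeroF hk))
      (j := fun t ht => (⟨insert (zeroF hk) t, by
        rw [Finset.mem_powersetCard] at ht
        rw [Finset.card_insert_of_notMem (fun h => (Finset.mem_erase.mp (ht.1 h)).1 rfl), ht.2]
        omega⟩ : VK (k := k)))
    case hi =>
      intro v hv
      rw [Finset.mem_powersetCard]
      simp only [starF, Finset.mem_filter] at hv
      refine ⟨fun x hx => Finset.mem_erase.mpr ⟨(Finset.mem_erase.mp hx).1, Finset.mem_univ x⟩, ?_⟩
      rw [Finset.card_erase_of_mem hv.2, v.2]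
    case hj =>
      intro t ht
      simp only [starF, Finset.mem_filter]
      exact ⟨Finset.mem_univ _, Finset.mem_insert_self _ _⟩
    case left_inv =>
      intro v hv
      simp only [starF, Finset.mem_filter] at hv
      exact Subtype.ext (Finset.insert_erase hv.2)
    case right_inv =>
      intro t ht
      rw [Finset.mem_powersetCard] at ht
      exact Finset.erase_insert (fun h => (Finset.mem_erase.mp (ht.1 h)).1 rfl)
  rw [hbij, Finset.card_powersetCard, Finset.card_erase_of_mem (Finset.mem_univ _)]
  simp

lemma card_Uset (hk : 2 ≤ k) : (Uset hk).card = (3*k-1).choose (k-1) + 2 := by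
  rw [Uset, Finset.card_insert_of_notMem (vA_not_rest hk),
    Finset.card_insert_of_notMem (vB_not_starF hk), card_starF hk]

end RKtest


/-- For every `k ≥ 2`, `α₁(KG(3k,k)) ≥ C(3k-1, k-1) + 2`. -/
theorem robustIndepNum_kneserGraph_three_k (k : ℕ) (hk : 2 ≤ k) :
    (3 * k - 1).choose (k - 1) + 2 ≤ robustIndepNum (kneserGraph (3 * k) k) := by
  classical
  set G := kneserGraph (3 * k) k with hG
  set f := RKtest.fsel hk with hf
  have hU : IsIndepVxSet (oneRemoved G f) ↑(RKtest.Uset hk) := by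
    intro a ha b hb hne hadj
    rw [oneRemoved, SimpleGraph.deleteEdges_adj] at hadj
    exact hadj.2 (RKtest.edge_in_range hk (Finset.mem_coe.mp ha) (Finset.mem_coe.mp hb) hne hadj.1.2)
  have h1 : (RKtest.Uset hk).card ≤ _root_.indepNum (oneRemoved G f) := by
    apply le_csSup
    · exact ⟨Fintype.card (RKtest.VK (k := k)), by rintro n ⟨s, -, rfl⟩; exact Finset.card_le_univ s⟩
    · exact ⟨RKtest.Uset hk, hU, rfl⟩
  have h2 : ∀ g : RKtest.VK (k := k) → Sym2 (RKtest.VK (k := k)),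
      _root_.indepNum (oneRemoved G g) ≤ Fintype.card (RKtest.VK (k := k)) := by
    intro g
    apply csSup_le
    · exact ⟨0, ∅, by simp [IsIndepVxSet], by simp⟩
    · rintro n ⟨s, -, rfl⟩; exact Finset.card_le_univ s
  calc (3 * k - 1).choose (k - 1) + 2 = (RKtest.Uset hk).card := (RKtest.card_Uset hk).symm
    _ ≤ _root_.indepNum (oneRemoved G f) := h1
    _ ≤ robustIndepNum G := by
      apply le_csSup
      · exact ⟨Fintype.card (RKtest.VK (k := k)), by rintro m ⟨g, -, rfl⟩; exact h2 g⟩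
      · exact ⟨f, RKtest.fsel_sel hk, rfl⟩
end
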